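/- arXiv:2212.14239 — 16 statements merged into one kernel-verified Lean document; each statement's English description precedes it below -/
import Mathlib

section
/- The semigroup B(X,P) is regular: for every f in B(X,P) there exists g in B(X,P) such that fgf = f, i.e. f(g(f(x))) = f(x) for all x in X. -/
open Cardinal

/-- `P : I → Set X` is a partition of `X`: blocks are nonempty, pairwise disjoint,
and cover `X`. -/
def IsPartition {X I : Type*} (P : I → Set X) : Prop :=
  (∀ i, (P i).Nonempty) ∧ Pairwise (Function.onFun Disjoint P) ∧ ∀ x, ∃ i, x ∈ P i

/-- `f` belongs to `B(X,P)` with character `χ`: `f` maps each block `P i` into the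
block `P (χ i)`, and `χ` is a bijection of the index set. -/
def MemB {X I : Type*} (P : I → Set X) (f : X → X) (χ : I → I) : Prop :=
  (∀ i, Set.MapsTo f (P i) (P (χ i))) ∧ Function.Bijective χ

/-- The semigroup `B(X,P)` is regular. -/
theorem B_regular {X I : Type*} [Nonempty X] (P : I → Set X) (hP : IsPartition P)
    (f : X → X) (χf : I → I) (hf : MemB P f χf) :
    ∃ g χg, MemB P g χg ∧ ∀ x, f (g (f x)) = f x := by
  classical
  obtain ⟨hne, hdisj, hcov⟩ := hP
  obtain ⟨hmaps, hbij⟩ := hf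
  -- uniqueness of block index
  have huniq : ∀ {x i j}, x ∈ P i → x ∈ P j → i = j := by
    intro x i j hi hj
    by_contra h
    exact (hdisj h).le_bot ⟨hi, hj⟩
  set e := Equiv.ofBijective χf hbij with he
  -- index of a point
  let idx : X → I := fun y => (hcov y).choose
  have hidx : ∀ y, y ∈ P (idx y) := fun y => (hcov y).choose_spec
  let g : X → X := fun y =>
    if h : ∃ x, f x = y then h.choose else (hne (e.symm (idx y))).choose
  refine ⟨g, e.symm, ⟨?_, e.symm.bijective⟩, ?_⟩
  · intro j y hy
    by_cases h : ∃ x, f x = y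
    · have hx : f h.choose = y := h.choose_spec
      have hx1 : h.choose ∈ P (idx h.choose) := hidx _
      have hx2 : f h.choose ∈ P (χf (idx h.choose)) := hmaps _ hx1
      rw [hx] at hx2
      have : χf (idx h.choose) = j := huniq hx2 hy
      have hij : idx h.choose = e.symm j := by
        apply e.injective
        rw [e.apply_symm_apply]
        exact this
      simp only [g, dif_pos h]
      rw [← hij]; exact hx1
    · have : idx y = j := huniq (hidx y) hy
      simp only [g, dif_neg h, this]
      exact (hne (e.symm j)).choose_spec
  · intro x
    have h : ∃ x', f x' = f x := ⟨x, rfl⟩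
    simp only [g, dif_pos h]
    exact h.choose_spec
end

section
/- Let f be in B(X,P). Then f is unit-regular in B(X,P) (i.e. there exists a unit u of B(X,P) with fuf = f, meaning f(u(f(x))) = f(x) for all x) if and only if for every i in I there exists a transversal T of the kernel of the restriction f|X_i such that |X_i \ T| = |X_{chi_f(i)} \ f(X_i)| (as cardinals). -/
open Cardinal

/-- `u` is a unit of the monoid `B(X,P)`: it lies in `B(X,P)` and has a two-sided
inverse lying in `B(X,P)`. -/
def IsUnitB {X I : Type*} (P : I → Set X) (u : X → X) : Prop :=
  ∃ χu, MemB P u χu ∧ ∃ v χv, MemB P v χv ∧ (∀ x, v (u x) = x) ∧ (∀ x, u (v x) = x)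

/-- `f ∈ B(X,P)` is unit-regular iff for every `i` there is a transversal `T` of the
kernel of `f` restricted to `P i` with `|P i \ T| = |P (χf i) \ f '' (P i)|`. -/
theorem unit_regular_element_iff {X I : Type*} [Nonempty X] (P : I → Set X)
    (hP : IsPartition P) (f : X → X) (χf : I → I) (hf : MemB P f χf) :
    (∃ u, IsUnitB P u ∧ ∀ x, f (u (f x)) = f x) ↔
      ∀ i, ∃ T : Set X, T ⊆ P i ∧ (∀ x ∈ P i, ∃! t, t ∈ T ∧ f t = f x) ∧
        Cardinal.mk ↥(P i \ T) = Cardinal.mk ↥(P (χf i) \ f '' (P i)) := by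
  classical
  obtain ⟨hne, hdisj, hcov⟩ := hP
  obtain ⟨hfmap, hfbij⟩ := hf
  choose blk hblkmem using hcov
  have hblkeq : ∀ {x : X} {i : I}, x ∈ P i → blk x = i := by
    intro x i hx
    by_contra hne'
    exact Set.disjoint_left.mp (hdisj hne') (hblkmem x) hx
  constructor
  · rintro ⟨u, ⟨χu, ⟨humap, hubij⟩, v, χv, ⟨hvmap, hvbij⟩, hvu, huv⟩, hfuf⟩
    intro i
    have huinj : Function.Injective u := Function.LeftInverse.injective hvu
    have hχufi : χu (χf i) = i := by
      obtain ⟨x, hx⟩ := hne i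
      have h1 : f x ∈ P (χf i) := hfmap i hx
      have h2 : u (f x) ∈ P (χu (χf i)) := humap _ h1
      have h3 : f (u (f x)) ∈ P (χf (χu (χf i))) := hfmap _ h2
      rw [hfuf x] at h3
      exact hfbij.1 ((hblkeq h3).symm.trans (hblkeq h1))
    have hTsub : ∀ y ∈ f '' (P i), u y ∈ P i := by
      intro y hy
      obtain ⟨x, hx, rfl⟩ := hy
      have := humap _ (hfmap i hx)
      rwa [hχufi] at this
    refine ⟨u '' (f '' (P i)), ?_, ?_, ?_⟩
    · rintro t ⟨y, hy, rfl⟩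
      exact hTsub y hy
    · intro x hx
      refine ⟨u (f x), ⟨⟨f x, ⟨x, hx, rfl⟩, rfl⟩, hfuf x⟩, ?_⟩
      rintro t ⟨⟨y, ⟨x', hx', rfl⟩, rfl⟩, hft⟩
      rw [hfuf x'] at hft
      rw [hft]
    · have hχvi : χv i = χf i := by
        obtain ⟨z, hz⟩ := hne i
        have h1 : v z ∈ P (χv i) := hvmap i hz
        have h2 : u (v z) ∈ P (χu (χv i)) := humap _ h1
        rw [huv z] at h2
        have hiz : χu (χv i) = i := (hblkeq h2).symm.trans (hblkeq hz)
        exact hubij.1 (hiz.trans hχufi.symm)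
      have hset : P i \ u '' (f '' (P i)) = u '' (P (χf i) \ f '' (P i)) := by
        ext z
        constructor
        · rintro ⟨hz1, hz2⟩
          refine ⟨v z, ⟨?_, ?_⟩, huv z⟩
          · have := hvmap i hz1; rwa [hχvi] at this
          · intro hvz
            exact hz2 ⟨v z, hvz, huv z⟩
        · rintro ⟨y, ⟨hy1, hy2⟩, rfl⟩
          constructor
          · have := humap _ hy1; rwa [hχufi] at this
          · rintro ⟨w, hw, hww⟩
            exact hy2 (huinj hww ▸ hw)
      rw [hset]
      exact Cardinal.mk_image_eq huinj
  · intro h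
    choose T hTsub hTtr hTcard using h
    set σ : I ≃ I := Equiv.ofBijective χf hfbij with hσ
    have hσs : ∀ i, σ.symm (χf i) = i := fun i => σ.symm_apply_apply i
    have hσa : ∀ j, χf (σ.symm j) = j := fun j => σ.apply_symm_apply j
    have e : ∀ i, (P i \ T i : Set X) ≃ (P (χf i) \ f '' (P i) : Set X) :=
      fun i => Classical.choice (Cardinal.eq.mp (hTcard i))
    set U : I → X → X := fun i x =>
      if hx : ∃ t, t ∈ T i ∧ f t = x then hx.choose
      else if hx2 : x ∈ P (χf i) \ f '' (P i) then ((e i).symm ⟨x, hx2⟩ : X) else x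
      with hUdef
    set V : I → X → X := fun i z =>
      if hz : z ∈ P i \ T i then ((e i) ⟨z, hz⟩ : X) else f z with hVdef
    have hU1 : ∀ i x, x ∈ f '' (P i) → U i x ∈ T i ∧ f (U i x) = x := by
      intro i x hx
      obtain ⟨y, hy, rfl⟩ := hx
      have hex : ∃ t, t ∈ T i ∧ f t = f y := ((hTtr i y hy).exists).imp (fun t ht => ht)
      simp only [hUdef]
      rw [dif_pos hex]
      exact ⟨hex.choose_spec.1, hex.choose_spec.2⟩
    have hU2 : ∀ i x (hx : x ∈ P (χf i) \ f '' (P i)), U i x = ((e i).symm ⟨x, hx⟩ : X) := by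
      intro i x hx
      have hnex : ¬ ∃ t, t ∈ T i ∧ f t = x := by
        rintro ⟨t, ht, rfl⟩
        exact hx.2 ⟨t, hTsub i ht, rfl⟩
      simp only [hUdef]
      rw [dif_neg hnex, dif_pos hx]
    set u : X → X := fun x => U (σ.symm (blk x)) x with hudef
    set v : X → X := fun z => V (blk z) z with hvdef
    have hux : ∀ i x, x ∈ P (χf i) → u x = U i x := by
      intro i x hx
      simp only [hudef, hblkeq hx, hσs i]
    have hvz : ∀ i z, z ∈ P i → v z = V i z := by
      intro i z hz
      simp only [hvdef, hblkeq hz]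
    have humap : ∀ i x, x ∈ P (χf i) → u x ∈ P i := by
      intro i x hx
      rw [hux i x hx]
      by_cases hxi : x ∈ f '' (P i)
      · exact hTsub i (hU1 i x hxi).1
      · rw [hU2 i x ⟨hx, hxi⟩]
        exact ((e i).symm ⟨x, ⟨hx, hxi⟩⟩).2.1
    have hvmap : ∀ i z, z ∈ P i → v z ∈ P (χf i) := by
      intro i z hz
      rw [hvz i z hz]
      by_cases hzi : z ∈ P i \ T i
      · simp only [hVdef]; rw [dif_pos hzi]
        exact ((e i) ⟨z, hzi⟩).2.1
      · simp only [hVdef]; rw [dif_neg hzi]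
        exact hfmap i hz
    have hUuniq : ∀ i y, y ∈ P i → ∀ t, t ∈ T i → f t = f y → U i (f y) = t := by
      intro i y hy t ht hft
      obtain ⟨h1, h2⟩ := hU1 i (f y) ⟨y, hy, rfl⟩
      exact (hTtr i y hy).unique ⟨h1, h2⟩ ⟨ht, hft⟩
    have hvu : ∀ x, v (u x) = x := by
      intro x
      have hxPi : x ∈ P (χf (σ.symm (blk x))) := by
        rw [hσa (blk x)]; exact hblkmem x
      set i := σ.symm (blk x) with hi
      rw [hux i x hxPi]
      by_cases hxi : x ∈ f '' (P i)
      · obtain ⟨h1, h2⟩ := hU1 i x hxi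
        rw [hvz i _ (hTsub i h1)]
        simp only [hVdef]
        rw [dif_neg (fun hc => hc.2 h1)]
        exact h2
      · rw [hU2 i x ⟨hxPi, hxi⟩]
        have hmem := ((e i).symm ⟨x, ⟨hxPi, hxi⟩⟩).2
        rw [hvz i _ hmem.1]
        simp only [hVdef]
        rw [dif_pos hmem]
        rw [Subtype.coe_eta, Equiv.apply_symm_apply]
    have huv : ∀ z, u (v z) = z := by
      intro z
      have hzPi : z ∈ P (blk z) := hblkmem z
      set i := blk z with hi
      rw [hvz i z hzPi]
      by_cases hzi : z ∈ P i \ T i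
      · simp only [hVdef]
        rw [dif_pos hzi]
        have hy := ((e i) ⟨z, hzi⟩).2
        rw [hux i _ hy.1]
        rw [hU2 i _ hy]
        rw [Subtype.coe_eta, Equiv.symm_apply_apply]
      · simp only [hVdef]
        rw [dif_neg hzi]
        have hzT : z ∈ T i := by
          by_contra hc
          exact hzi ⟨hzPi, hc⟩
        rw [hux i _ (hfmap i hzPi)]
        exact hUuniq i z hzPi z hzT rfl
    have hfuf : ∀ x, f (u (f x)) = f x := by
      intro x
      have hx : x ∈ P (blk x) := hblkmem x
      rw [hux (blk x) _ (hfmap _ hx)]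
      exact (hU1 (blk x) (f x) ⟨x, hx, rfl⟩).2
    refine ⟨u, ⟨fun j => σ.symm j, ⟨?_, σ.symm.bijective⟩,
      v, χf, ⟨fun i z hz => hvmap i z hz, hfbij⟩, hvu, huv⟩, hfuf⟩
    intro j x hx
    apply humap (σ.symm j) x
    rw [hσa j]
    exact hx
end

section
/- The semigroup B(X,P) is unit-regular (every f in B(X,P) admits a unit u of B(X,P) with fuf = f) if and only if (i) P is a uniform partition, i.e. all blocks X_i have the same cardinality, and (ii) every block X_i of P is finite. -/
open Cardinal

/-- An infinite type admits an injective non-surjective self-map. -/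
lemma exists_inj_not_surj (α : Type*) [Infinite α] :
    ∃ g : α → α, Function.Injective g ∧ ¬Function.Surjective g := by
  classical
  let e := Infinite.natEmbedding α
  have einj : Function.Injective e := e.injective
  refine ⟨fun a => if h : ∃ n, e n = a then e (h.choose + 1) else a, ?_, ?_⟩
  · intro a b hab
    by_cases ha : ∃ n, e n = a <;> by_cases hb : ∃ n, e n = b <;>
      simp only [dif_pos, dif_neg, ha, hb, not_false_iff] at hab
    · rw [← ha.choose_spec, ← hb.choose_spec]
      exact congrArg e (Nat.succ_injective (einj hab))
    · exact absurd ⟨_, hab⟩ hb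
    · exact absurd ⟨_, hab.symm⟩ ha
    · exact hab
  · intro hs
    obtain ⟨a, ha⟩ := hs (e 0)
    by_cases h : ∃ n, e n = a <;> simp only [dif_pos, dif_neg, h, not_false_iff] at ha
    · exact Nat.succ_ne_zero _ (einj ha)
    · exact h ⟨0, ha.symm⟩

/-- An injection defined on a subset of a finite type extends to an equivalence
with any finite type of the same cardinality. -/
lemma extend_to_equiv {α β : Type*} [Finite α] [Finite β] (h : Nat.card α = Nat.card β)
    (s : Set α) (φ : ↥s → β) (hφ : Function.Injective φ) :
    ∃ e : α ≃ β, ∀ (x : α) (hx : x ∈ s), e x = φ ⟨x, hx⟩ := by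
  classical
  have hcard : Nat.card ↥(sᶜ) = Nat.card ↥((Set.range φ)ᶜ) := by
    have h1 : Nat.card ↥s = Nat.card ↥(Set.range φ) :=
      Nat.card_congr (Equiv.ofInjective φ hφ)
    have h2 := Set.ncard_add_ncard_compl s (Set.toFinite _) (Set.toFinite _)
    have h3 := Set.ncard_add_ncard_compl (Set.range φ) (Set.toFinite _) (Set.toFinite _)
    rw [Nat.card_coe_set_eq, Nat.card_coe_set_eq]
    rw [Nat.card_coe_set_eq, Nat.card_coe_set_eq] at h1
    omega
  obtain ⟨ψ⟩ := Finite.card_eq.mp hcard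
  refine ⟨(Equiv.Set.sumCompl s).symm.trans
    ((Equiv.sumCongr (Equiv.ofInjective φ hφ) ψ).trans (Equiv.Set.sumCompl (Set.range φ))), ?_⟩
  intro x hx
  simp [Equiv.Set.sumCompl_symm_apply_of_mem hx]

/-- `B(X,P)` is unit-regular iff `P` is uniform and every block of `P` is finite. -/
theorem B_unit_regular_iff {X I : Type*} [Nonempty X] (P : I → Set X)
    (hP : IsPartition P) :
    (∀ f χf, MemB P f χf → ∃ u, IsUnitB P u ∧ ∀ x, f (u (f x)) = f x) ↔
      (∀ i j : I, Cardinal.mk ↥(P i) = Cardinal.mk ↥(P j)) ∧ ∀ i, (P i).Finite := by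
  classical
  obtain ⟨hne, hdisj, hcov⟩ := hP
  choose idx memP using hcov
  have idx_eq : ∀ x i, x ∈ P i → idx x = i := by
    intro x i hx
    by_contra hne'
    exact Set.disjoint_left.mp (hdisj hne') (memP x) hx
  have blk_eq : ∀ {x : X} {i j : I}, x ∈ P i → x ∈ P j → i = j := by
    intro x i j hi hj
    rw [← idx_eq x i hi, idx_eq x j hj]
  choose pt pt_mem using hne
  constructor
  · intro hreg
    constructor
    · -- uniformity
      intro i j
      set σ : I ≃ I := Equiv.swap i j with hσ
      set f : X → X := fun x => pt (σ (idx x)) with hf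
      have hmemB : MemB P f ⇑σ := by
        refine ⟨fun k x hx => ?_, σ.bijective⟩
        show pt (σ (idx x)) ∈ P (σ k)
        rw [idx_eq x k hx]
        exact pt_mem _
      obtain ⟨u, ⟨χu, ⟨humaps, _⟩, v, χv, ⟨hvmaps, _⟩, hvu, huv⟩, hfuf⟩ := hreg f σ hmemB
      -- compute χu j = i
      have hx0 : f (pt i) = pt j := by
        show pt (σ (idx (pt i))) = pt j
        rw [idx_eq _ _ (pt_mem i), Equiv.swap_apply_left]
      have hu1 : u (pt j) ∈ P (χu j) := humaps j (pt_mem j)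
      have hfu1 : f (u (pt j)) ∈ P (σ (χu j)) := hmemB.1 (χu j) hu1
      have hkey : f (u (f (pt i))) = f (pt i) := hfuf (pt i)
      rw [hx0] at hkey
      have hσχ : σ (χu j) = j := blk_eq (hkey ▸ hfu1) (pt_mem j)
      have hχuj : χu j = i := by
        apply σ.injective
        rw [hσχ, Equiv.swap_apply_left]
      -- compute χv i = j
      have huz : u (pt j) ∈ P i := hχuj ▸ hu1
      have hvz : v (u (pt j)) ∈ P (χv i) := hvmaps i huz
      rw [hvu (pt j)] at hvz
      have hχvi : χv i = j := blk_eq hvz (pt_mem j)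
      -- injections both ways
      have huinj : Function.Injective u := Function.LeftInverse.injective hvu
      have hvinj : Function.Injective v := Function.LeftInverse.injective huv
      apply le_antisymm
      · refine Cardinal.mk_le_of_injective
          (f := fun a : ↥(P i) => (⟨v ↑a, hχvi ▸ hvmaps i a.2⟩ : ↥(P j))) ?_
        intro a b hab
        exact Subtype.ext (hvinj (congrArg Subtype.val hab))
      · refine Cardinal.mk_le_of_injective
          (f := fun a : ↥(P j) => (⟨u ↑a, hχuj ▸ humaps j a.2⟩ : ↥(P i))) ?_
        intro a b hab
        exact Subtype.ext (huinj (congrArg Subtype.val hab))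
    · -- finiteness
      intro i
      by_contra hinf
      have : Infinite ↥(P i) := Set.infinite_coe_iff.mpr hinf
      obtain ⟨g, ginj, gnsurj⟩ := exists_inj_not_surj ↥(P i)
      set f : X → X := fun x => if h : x ∈ P i then (↑(g ⟨x, h⟩) : X) else x with hf
      have hmemB : MemB P f id := by
        refine ⟨fun k x hx => ?_, Function.bijective_id⟩
        show (if h : x ∈ P i then (↑(g ⟨x, h⟩) : X) else x) ∈ P k
        by_cases hxi : x ∈ P i
        · rw [dif_pos hxi]
          have hk : k = i := blk_eq hx hxi
          subst hk
          exact (g ⟨x, hxi⟩).2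
        · rw [dif_neg hxi]
          exact hx
      obtain ⟨u, ⟨χu, ⟨humaps, _⟩, v, χv, ⟨hvmaps, _⟩, hvu, huv⟩, hfuf⟩ := hreg f id hmemB
      have huinj : Function.Injective u := Function.LeftInverse.injective hvu
      have fval : ∀ (x : X) (hx : x ∈ P i), f x = ↑(g ⟨x, hx⟩) := fun x hx => dif_pos hx
      have fmem : ∀ (x : X), x ∈ P i → f x ∈ P i := fun x hx => by
        rw [fval x hx]; exact (g ⟨x, hx⟩).2
      -- χu i = i
      have hu1 : u (f (pt i)) ∈ P (χu i) := humaps i (fmem _ (pt_mem i))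
      have hfu1 : f (u (f (pt i))) ∈ P (χu i) := hmemB.1 (χu i) hu1
      rw [hfuf (pt i)] at hfu1
      have hχui : χu i = i := blk_eq hfu1 (fmem _ (pt_mem i))
      -- g is surjective: contradiction
      apply gnsurj
      intro y
      have hxy : u ↑y ∈ P i := by
        have := humaps i y.2
        rwa [hχui] at this
      have h1 : f (u (f (u ↑y))) = f (u ↑y) := hfuf (u ↑y)
      have hufy : u (f (u ↑y)) ∈ P i := by
        have := humaps i (fmem _ hxy)
        rwa [hχui] at this
      have h2 : (↑(g ⟨u (f (u ↑y)), hufy⟩) : X) = ↑(g ⟨u ↑y, hxy⟩) := by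
        rw [← fval _ hufy, ← fval _ hxy]
        exact h1
      have h3 : u (f (u ↑y)) = u ↑y :=
        congrArg Subtype.val (ginj (Subtype.ext h2))
      have h4 : f (u ↑y) = ↑y := huinj h3
      refine ⟨⟨u ↑y, hxy⟩, Subtype.ext ?_⟩
      rw [← fval _ hxy, h4]
  · -- converse
    rintro ⟨huni, hfin⟩ f χf ⟨hmaps, hbij⟩
    set σ : I ≃ I := Equiv.ofBijective χf hbij with hσ
    have hχσ : ∀ j, χf (σ.symm j) = j := fun j => σ.apply_symm_apply j
    have hσχ : ∀ k, σ.symm (χf k) = k := fun k => σ.symm_apply_apply k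
    -- build the block-wise inverse equivalences
    have he : ∀ k : I, ∃ e : ↥(P (χf k)) ≃ ↥(P k),
        ∀ (y : ↥(P (χf k))) (hy : (↑y : X) ∈ f '' P k), f ↑(e y) = ↑y := by
      intro k
      have hf1 : Finite ↥(P (χf k)) := (hfin _).to_subtype
      have hf2 : Finite ↥(P k) := (hfin _).to_subtype
      obtain ⟨eqv⟩ := Cardinal.eq.mp (huni (χf k) k)
      have hcard : Nat.card ↥(P (χf k)) = Nat.card ↥(P k) := Nat.card_congr eqv
      set s : Set ↥(P (χf k)) := {y | (↑y : X) ∈ f '' P k} with hs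
      have hpre : ∀ z : ↥s, ∃ x, x ∈ P k ∧ f x = ((z : ↥(P (χf k))) : X) := fun z => z.2
      choose pre hpre1 hpre2 using hpre
      have hφinj : Function.Injective (fun z : ↥s => (⟨pre z, hpre1 z⟩ : ↥(P k))) := by
        intro z z' hzz'
        have h1 : pre z = pre z' := congrArg Subtype.val hzz'
        have h2 : ((z : ↥(P (χf k))) : X) = ((z' : ↥(P (χf k))) : X) := by
          rw [← hpre2 z, ← hpre2 z', h1]
        exact Subtype.ext (Subtype.ext h2)
      obtain ⟨e, hespec⟩ := extend_to_equiv hcard s _ hφinj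
      refine ⟨e, fun y hy => ?_⟩
      rw [hespec y hy]
      exact hpre2 ⟨y, hy⟩
    choose e hespec using he
    -- global maps
    have hmem : ∀ x : X, x ∈ P (χf (σ.symm (idx x))) := fun x => by
      rw [hχσ]; exact memP x
    set u : X → X := fun x => ↑(e (σ.symm (idx x)) ⟨x, hmem x⟩) with hu
    set v : X → X := fun x => ↑((e (idx x)).symm ⟨x, memP x⟩) with hv
    have keyU : ∀ (k k' : I), k = k' → ∀ (x : X) (h1 : x ∈ P (χf k)) (h2 : x ∈ P (χf k')),
        (↑(e k ⟨x, h1⟩) : X) = ↑(e k' ⟨x, h2⟩) := by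
      rintro k k' rfl x h1 h2; rfl
    have keyV : ∀ (k k' : I), k = k' → ∀ (x : X) (h1 : x ∈ P k) (h2 : x ∈ P k'),
        (↑((e k).symm ⟨x, h1⟩) : X) = ↑((e k').symm ⟨x, h2⟩) := by
      rintro k k' rfl x h1 h2; rfl
    have uval : ∀ (k : I) (x : X) (hx : x ∈ P (χf k)), u x = ↑(e k ⟨x, hx⟩) := by
      intro k x hx
      have h1 : σ.symm (idx x) = k := by rw [idx_eq x (χf k) hx]; exact hσχ k
      exact keyU _ _ h1 x (hmem x) hx
    have vval : ∀ (k : I) (x : X) (hx : x ∈ P k), v x = ↑((e k).symm ⟨x, hx⟩) := by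
      intro k x hx
      exact keyV _ _ (idx_eq x k hx) x (memP x) hx
    have umem : ∀ (k : I) (x : X) (hx : x ∈ P (χf k)), u x ∈ P k := fun k x hx => by
      rw [uval k x hx]; exact (e k ⟨x, hx⟩).2
    have vmem : ∀ (k : I) (x : X) (hx : x ∈ P k), v x ∈ P (χf k) := fun k x hx => by
      rw [vval k x hx]; exact ((e k).symm ⟨x, hx⟩).2
    have hvu : ∀ x, v (u x) = x := by
      intro x
      set k := σ.symm (idx x) with hk
      have hx : x ∈ P (χf k) := hmem x
      have h1 : u x ∈ P k := umem k x hx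
      rw [vval k (u x) h1]
      have h2 : (⟨u x, h1⟩ : ↥(P k)) = e k ⟨x, hx⟩ := Subtype.ext (uval k x hx)
      rw [h2, Equiv.symm_apply_apply]
    have huv : ∀ x, u (v x) = x := by
      intro x
      set k := idx x with hk
      have hx : x ∈ P k := memP x
      have h1 : v x ∈ P (χf k) := vmem k x hx
      rw [uval k (v x) h1]
      have h2 : (⟨v x, h1⟩ : ↥(P (χf k))) = (e k).symm ⟨x, hx⟩ := Subtype.ext (vval k x hx)
      rw [h2, Equiv.apply_symm_apply]
    refine ⟨u, ⟨⇑σ.symm, ⟨fun j x hx => ?_, σ.symm.bijective⟩,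
      v, χf, ⟨vmem, hbij⟩, hvu, huv⟩, ?_⟩
    · have hx' : x ∈ P (χf (σ.symm j)) := by rw [hχσ]; exact hx
      exact umem (σ.symm j) x hx'
    · intro x
      have hfx : f x ∈ P (χf (idx x)) := hmaps (idx x) (memP x)
      rw [uval (idx x) (f x) hfx]
      exact hespec (idx x) ⟨f x, hfx⟩ ⟨x, memP x, rfl⟩
end

section
/- Let f, g be in B(X,P). Then there exists h in B(X,P) with f = hg (i.e. f(x) = g(h(x)) for all x in X) if and only if there exists a bijection alpha : I -> I such that f(X_i) is contained in g(X_{alpha(i)}) for all i in I. -/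
open Cardinal

/-- `L_f ≤ L_g` in `B(X,P)` iff there is a bijection `α` of `I` with
`f '' (P i) ⊆ g '' (P (α i))` for all `i`. -/
theorem L_le_iff {X I : Type*} [Nonempty X] (P : I → Set X) (hP : IsPartition P)
    (f g : X → X) (χf χg : I → I) (hf : MemB P f χf) (hg : MemB P g χg) :
    (∃ h χh, MemB P h χh ∧ ∀ x, f x = g (h x)) ↔
      ∃ α : I → I, Function.Bijective α ∧ ∀ i, f '' (P i) ⊆ g '' (P (α i)) := by
  classical
  constructor
  · rintro ⟨h, χh, ⟨hmaps, hbij⟩, heq⟩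
    refine ⟨χh, hbij, fun i x hx => ?_⟩
    obtain ⟨a, ha, rfl⟩ := hx
    exact ⟨h a, hmaps i ha, (heq a).symm⟩
  · rintro ⟨α, hαbij, hsub⟩
    have idx : ∀ x : X, ∃ i, x ∈ P i := hP.2.2
    choose ix hix using idx
    have huniq : ∀ {x : X} {i : I}, x ∈ P i → ix x = i := by
      intro x i hxi
      by_contra hne
      exact (hP.2.1 hne).le_bot ⟨hix x, hxi⟩
    have hmem : ∀ x : X, f x ∈ g '' (P (α (ix x))) := fun x =>
      hsub (ix x) ⟨x, hix x, rfl⟩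
    choose h hh hgh using hmem
    refine ⟨h, α, ⟨fun i x hxi => ?_, hαbij⟩, fun x => (hgh x).symm⟩
    rw [← huniq hxi]
    exact hh x
end

section
/- Let f, g be in B(X,P). Then f and g are Green's L-related in B(X,P) (there exist h, h' in B(X,P) with f = hg and g = h'f, i.e. f(x) = g(h(x)) and g(x) = f(h'(x)) for all x) if and only if there exists a bijection alpha : I -> I such that f(X_i) = g(X_{alpha(i)}) for all i in I. -/
open Cardinal

/-- Green's `L` relation on `B(X,P)` (left-to-right composition: `f = hg` means
`f x = g (h x)`). -/
def GreenL {X I : Type*} (P : I → Set X) (f g : X → X) : Prop :=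
  ∃ h χh h' χh', MemB P h χh ∧ MemB P h' χh' ∧
    (∀ x, f x = g (h x)) ∧ (∀ x, g x = f (h' x))

/-- Green's `R` relation on `B(X,P)` (`f = gh` means `f x = h (g x)`). -/
def GreenR {X I : Type*} (P : I → Set X) (f g : X → X) : Prop :=
  ∃ h χh h' χh', MemB P h χh ∧ MemB P h' χh' ∧
    (∀ x, f x = h (g x)) ∧ (∀ x, g x = h' (f x))

/-- Green's `D` relation on `B(X,P)`. -/
def GreenD {X I : Type*} (P : I → Set X) (f g : X → X) : Prop :=
  ∃ k χk, MemB P k χk ∧ GreenL P f k ∧ GreenR P k g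

/-- Green's `J` relation on `B(X,P)` (`f = h₁ g h₂` means `f x = h₂ (g (h₁ x))`). -/
def GreenJ {X I : Type*} (P : I → Set X) (f g : X → X) : Prop :=
  (∃ h1 χ1 h2 χ2, MemB P h1 χ1 ∧ MemB P h2 χ2 ∧ ∀ x, f x = h2 (g (h1 x))) ∧
  (∃ h3 χ3 h4 χ4, MemB P h3 χ3 ∧ MemB P h4 χ4 ∧ ∀ x, g x = h4 (f (h3 x)))

/-- `f L g` in `B(X,P)` iff there is a bijection `α` of `I` with
`f '' (P i) = g '' (P (α i))` for all `i`. -/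
theorem L_iff {X I : Type*} [Nonempty X] (P : I → Set X) (hP : IsPartition P)
    (f g : X → X) (χf χg : I → I) (hf : MemB P f χf) (hg : MemB P g χg) :
    GreenL P f g ↔
      ∃ α : I → I, Function.Bijective α ∧ ∀ i, f '' (P i) = g '' (P (α i)) := by

  obtain ⟨hne, hdisj, hcov⟩ := hP
  have huniq : ∀ x i j, x ∈ P i → x ∈ P j → i = j := by
    intro x i j hxi hxj
    by_contra hij
    exact Set.disjoint_left.mp (hdisj hij) hxi hxj
  constructor
  · rintro ⟨h, χh, h', χh', ⟨hmap, hbij⟩, ⟨h'map, h'bij⟩, hfg, hgf⟩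
    have key1 : ∀ i, χg (χh i) = χf i := by
      intro i
      obtain ⟨x, hx⟩ := hne i
      have h1 : f x ∈ P (χg (χh i)) := by rw [hfg x]; exact hg.1 _ (hmap _ hx)
      exact huniq (f x) _ _ h1 (hf.1 _ hx)
    have key2 : ∀ j, χf (χh' j) = χg j := by
      intro j
      obtain ⟨z, hz⟩ := hne j
      have h1 : g z ∈ P (χf (χh' j)) := by rw [hgf z]; exact hf.1 _ (h'map _ hz)
      exact huniq (g z) _ _ h1 (hg.1 _ hz)
    have key3 : ∀ i, χh' (χh i) = i := by
      intro i
      apply hf.2.1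
      rw [key2, key1]
    refine ⟨χh, hbij, fun i => Set.Subset.antisymm ?_ ?_⟩
    · rintro y ⟨x, hx, rfl⟩
      exact ⟨h x, hmap _ hx, (hfg x).symm⟩
    · rintro y ⟨z, hz, rfl⟩
      refine ⟨h' z, ?_, (hgf z).symm⟩
      have := h'map _ hz
      rwa [key3] at this
  · rintro ⟨α, αbij, hα⟩
    set e := Equiv.ofBijective α αbij with he
    have hι : ∀ x, x ∈ P (hcov x).choose := fun x => (hcov x).choose_spec
    have hex : ∀ x, ∃ z, z ∈ P (α (hcov x).choose) ∧ g z = f x := by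
      intro x
      have hm : f x ∈ g '' P (α (hcov x).choose) := by
        rw [← hα]; exact ⟨x, hι x, rfl⟩
      obtain ⟨z, hz, hz2⟩ := hm; exact ⟨z, hz, hz2⟩
    have hex' : ∀ x, ∃ z, z ∈ P (e.symm (hcov x).choose) ∧ f z = g x := by
      intro x
      have h2 : f '' P (e.symm (hcov x).choose) = g '' P ((hcov x).choose) := by
        have h3 := hα (e.symm (hcov x).choose)
        rwa [show α (e.symm (hcov x).choose) = (hcov x).choose from e.apply_symm_apply _] at h3
      have hm : g x ∈ f '' P (e.symm (hcov x).choose) := by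
        rw [h2]; exact ⟨x, hι x, rfl⟩
      obtain ⟨z, hz, hz2⟩ := hm; exact ⟨z, hz, hz2⟩
    refine ⟨fun x => (hex x).choose, α, fun x => (hex' x).choose, ⇑e.symm,
      ⟨?_, αbij⟩, ⟨?_, e.symm.bijective⟩, ?_, ?_⟩
    · intro i x hx
      have hidx : (hcov x).choose = i := huniq x _ _ (hι x) hx
      rw [← hidx]
      exact (hex x).choose_spec.1
    · intro i x hx
      have hidx : (hcov x).choose = i := huniq x _ _ (hι x) hx
      rw [← hidx]
      exact (hex' x).choose_spec.1
    · intro x; exact ((hex x).choose_spec.2).symm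
    · intro x; exact ((hex' x).choose_spec.2).symm
end

section
/- Let f, g be in B(X,P). Then there exists h in B(X,P) with f = gh (i.e. f(x) = h(g(x)) for all x in X) if and only if the kernel of g is contained in the kernel of f, i.e. for all x, y in X, g(x) = g(y) implies f(x) = f(y). -/
open Cardinal

/-- `R_f ≤ R_g` in `B(X,P)` iff `ker g ⊆ ker f`. -/
theorem R_le_iff {X I : Type*} [Nonempty X] (P : I → Set X) (hP : IsPartition P)
    (f g : X → X) (χf χg : I → I) (hf : MemB P f χf) (hg : MemB P g χg) :
    (∃ h χh, MemB P h χh ∧ ∀ x, f x = h (g x)) ↔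
      ∀ x y : X, g x = g y → f x = f y := by
  constructor
  · rintro ⟨h, χh, _, hfh⟩ x y hxy
    rw [hfh x, hfh y, hxy]
  · intro hker
    classical
    have hidx : ∀ {x : X} {i j : I}, x ∈ P i → x ∈ P j → i = j := by
      intro x i j hi hj
      by_contra hne
      exact (hP.2.1 hne).le_bot ⟨hi, hj⟩
    have hNI : Nonempty I := ⟨(hP.2.2 (Classical.arbitrary X)).choose⟩
    set σ := Function.invFun χg with hσ
    have hσl : Function.LeftInverse σ χg := Function.leftInverse_invFun hg.2.1
    have hσr : Function.RightInverse σ χg := Function.rightInverse_invFun hg.2.2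
    have hσbij : Function.Bijective σ :=
      Function.bijective_iff_has_inverse.2 ⟨χg, hσr, hσl⟩
    set χh := fun j => χf (σ j) with hχh
    set idx := fun y : X => (hP.2.2 y).choose with hidxdef
    have hidxmem : ∀ y, y ∈ P (idx y) := fun y => (hP.2.2 y).choose_spec
    set h := fun y : X =>
      if hy : ∃ x, g x = y then f hy.choose else (hP.1 (χh (idx y))).some with hh
    refine ⟨h, χh, ⟨?_, hf.2.comp hσbij⟩, ?_⟩
    · intro j y hy
      by_cases hey : ∃ x, g x = y
      · obtain ⟨i, hi⟩ := hP.2.2 hey.choose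
        have hgx : g hey.choose ∈ P (χg i) := hg.1 i hi
        rw [hey.choose_spec] at hgx
        have hji : χg i = j := hidx hgx hy
        have hfx : f hey.choose ∈ P (χf i) := hf.1 i hi
        have hχhj : χh j = χf i := by rw [← hji, hχh]; simp [hσl i]
        simp only [hh]
        rw [dif_pos hey, hχhj]
        exact hfx
      · simp only [hh]
        rw [dif_neg hey]
        have : idx y = j := hidx (hidxmem y) hy
        rw [this]
        exact (hP.1 (χh j)).some_mem
    · intro x
      have hey : ∃ x', g x' = g x := ⟨x, rfl⟩
      simp only [hh]
      rw [dif_pos hey]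
      exact (hker hey.choose x hey.choose_spec).symm
end

section
/- Let f, g be in B(X,P). Then f and g are Green's R-related in B(X,P) (there exist h, h' in B(X,P) with f = gh and g = fh', i.e. f(x) = h(g(x)) and g(x) = h'(f(x)) for all x) if and only if f and g have the same kernel, i.e. for all x, y in X, f(x) = f(y) holds if and only if g(x) = g(y). -/
open Cardinal

theorem exists_translate {X I : Type*} (P : I → Set X) (hP : IsPartition P)
    (f g : X → X) (χf χg : I → I) (hf : MemB P f χf) (hg : MemB P g χg)
    (hker : ∀ x y, g x = g y → f x = f y) :
    ∃ h χh, MemB P h χh ∧ ∀ x, f x = h (g x) := by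
  classical
  obtain ⟨hne, hdisj, hcov⟩ := hP
  have huniq : ∀ {x : X} {i j : I}, x ∈ P i → x ∈ P j → i = j := by
    intro x i j hi hj
    by_contra hne'
    exact ((hdisj hne').le_bot ⟨hi, hj⟩).elim
  let e := Equiv.ofBijective χg hg.2
  let idx : X → I := fun y => (hcov y).choose
  have hidx : ∀ y, y ∈ P (idx y) := fun y => (hcov y).choose_spec
  refine ⟨fun y => if hy : ∃ x, g x = y then f hy.choose
      else (hne (χf (e.symm (idx y)))).choose,
    χf ∘ e.symm, ⟨?_, hf.2.comp e.symm.bijective⟩, ?_⟩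
  · intro j y hy
    dsimp only
    split_ifs with hex
    · have hgx : g hex.choose = y := hex.choose_spec
      have h1 : g hex.choose ∈ P (χg (idx hex.choose)) := hg.1 _ (hidx _)
      rw [hgx] at h1
      have hji : j = χg (idx hex.choose) := huniq hy h1
      have h2 : e.symm j = idx hex.choose := by
        rw [hji]; exact e.symm_apply_apply _
      rw [Function.comp_apply, h2]
      exact hf.1 _ (hidx _)
    · have h3 : idx y = j := huniq (hidx y) hy
      rw [Function.comp_apply, ← h3]
      exact (hne _).choose_spec
  · intro x
    have hex : ∃ x', g x' = g x := ⟨x, rfl⟩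
    simp only [dif_pos hex]
    exact hker _ _ hex.choose_spec.symm

/-- `f R g` in `B(X,P)` iff `f` and `g` have the same kernel. -/
theorem R_iff {X I : Type*} [Nonempty X] (P : I → Set X) (hP : IsPartition P)
    (f g : X → X) (χf χg : I → I) (hf : MemB P f χf) (hg : MemB P g χg) :
    GreenR P f g ↔ ∀ x y : X, f x = f y ↔ g x = g y := by
  constructor
  · rintro ⟨h, χh, h', χh', _, _, hfh, hgh⟩ x y
    constructor
    · intro hxy
      rw [hgh x, hgh y, hxy]
    · intro hxy
      rw [hfh x, hfh y, hxy]
  · intro hk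
    obtain ⟨h, χh, hmem, heq⟩ := exists_translate P hP f g χf χg hf hg
      (fun x y hxy => (hk x y).mpr hxy)
    obtain ⟨h', χh', hmem', heq'⟩ := exists_translate P hP g f χg χf hg hf
      (fun x y hxy => (hk x y).mp hxy)
    exact ⟨h, χh, h', χh', hmem, hmem', heq, heq'⟩
end

section
/- Let f, g be in B(X,P). Then f and g are Green's D-related in B(X,P) (there exists h in B(X,P) with f L h and h R g) if and only if there exists a bijection alpha : I -> I such that |f(X_i)| = |g(X_{alpha(i)})| (equality of cardinals) for all i in I. -/
open Cardinal

/-- `f D g` in `B(X,P)` iff there is a bijection `α` of `I` with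
`|f '' (P i)| = |g '' (P (α i))|` for all `i`. -/
theorem D_iff {X I : Type*} [Nonempty X] (P : I → Set X) (hP : IsPartition P)
    (f g : X → X) (χf χg : I → I) (hf : MemB P f χf) (hg : MemB P g χg) :
    GreenD P f g ↔
      ∃ α : I → I, Function.Bijective α ∧
        ∀ i, Cardinal.mk ↥(f '' (P i)) = Cardinal.mk ↥(g '' (P (α i))) := by
  classical
  obtain ⟨hne, hdisj, hcov⟩ := hP
  have uniq : ∀ {x : X} {i j : I}, x ∈ P i → x ∈ P j → i = j := by
    intro x i j hi hj
    by_contra hij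
    exact Set.disjoint_left.mp (hdisj hij) hi hj
  choose idx hidx using hcov
  have idx_eq : ∀ {x : X} {i : I}, x ∈ P i → idx x = i := fun h => uniq (hidx _) h
  constructor
  · rintro ⟨k, χk, hk, ⟨h, χh, h', χh', hh, hh', hfk, hkf⟩,
      ⟨t, χt, t', χt', ht, ht', hkt, htk⟩⟩
    refine ⟨χh, hh.2, fun i => ?_⟩
    have step1 : ∀ i, χh' (χh i) = i := by
      intro i
      obtain ⟨x, hx⟩ := hne i
      have e1 : f x = f (h' (h x)) := by rw [hfk x, hkf (h x)]
      have m1 : f x ∈ P (χf i) := hf.1 i hx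
      have m2 : f (h' (h x)) ∈ P (χf (χh' (χh i))) :=
        hf.1 _ (hh'.1 _ (hh.1 _ hx))
      rw [e1] at m1
      exact (hf.2.1 (uniq m1 m2)).symm
    have step2 : f '' P i = k '' P (χh i) := by
      ext y
      constructor
      · rintro ⟨x, hx, rfl⟩
        exact ⟨h x, hh.1 i hx, (hfk x).symm⟩
      · rintro ⟨z, hz, rfl⟩
        refine ⟨h' z, ?_, (hkf z).symm⟩
        have hz2 := hh'.1 _ hz
        rwa [step1 i] at hz2
    have himg : Cardinal.mk ↥(k '' P (χh i)) = Cardinal.mk ↥(g '' P (χh i)) := by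
      have e1 : k '' P (χh i) = t '' (g '' P (χh i)) := by
        rw [Set.image_image]
        exact Set.image_congr' (fun x => hkt x)
      have e2 : g '' P (χh i) = t' '' (k '' P (χh i)) := by
        rw [Set.image_image]
        exact Set.image_congr' (fun x => htk x)
      apply le_antisymm
      · rw [e1]; exact Cardinal.mk_image_le
      · rw [e2]; exact Cardinal.mk_image_le
    rw [step2]
    exact himg
  · rintro ⟨α, hα, hcard⟩
    obtain ⟨ai, ail, air⟩ := Function.bijective_iff_has_inverse.mp hα
    obtain ⟨fi, fil, fir⟩ := Function.bijective_iff_has_inverse.mp hf.2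
    obtain ⟨gi, gil, gir⟩ := Function.bijective_iff_has_inverse.mp hg.2
    have hai : Function.Bijective ai := Function.bijective_iff_has_inverse.mpr ⟨α, air, ail⟩
    have hgi : Function.Bijective gi := Function.bijective_iff_has_inverse.mpr ⟨χg, gir, gil⟩
    have hfi : Function.Bijective fi := Function.bijective_iff_has_inverse.mpr ⟨χf, fir, fil⟩
    have e : ∀ i, ↥(f '' P i) ≃ ↥(g '' P (α i)) :=
      fun i => Classical.choice (Cardinal.eq.mp (hcard i))
    have pf : ∀ x : X, g x ∈ g '' P (α (ai (idx x))) := by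
      intro x
      rw [air (idx x)]
      exact ⟨x, hidx x, rfl⟩
    let K : (x : X) → ↥(f '' P (ai (idx x))) :=
      fun x => (e (ai (idx x))).symm ⟨g x, pf x⟩
    let k : X → X := fun x => ↑(K x)
    have kmem : ∀ x, k x ∈ f '' P (ai (idx x)) := fun x => (K x).2
    have k_eval : ∀ (x : X) (i : I) (hx : x ∈ P (α i)),
        ∀ p : g x ∈ g '' P (α i), k x = ↑((e i).symm ⟨g x, p⟩) := by
      intro x i hx
      have h1' : ai (idx x) = i := by rw [idx_eq hx, ail]
      rw [← h1']
      intro p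
      rfl
    have hkB : MemB P k (fun j => χf (ai j)) := by
      constructor
      · intro j x hx
        have h1' : k x ∈ f '' P (ai j) := by
          have h2' := kmem x
          rwa [idx_eq hx] at h2'
        obtain ⟨x0, hx0, hfx0⟩ := h1'
        rw [← hfx0]
        exact hf.1 _ hx0
      · exact hf.2.comp hai
    have H1 : ∀ x : X, ∃ y, y ∈ P (α (idx x)) ∧
        g y = ↑(e (idx x) ⟨f x, ⟨x, hidx x, rfl⟩⟩) := by
      intro x
      obtain ⟨y, hy, hgy⟩ := (e (idx x) ⟨f x, ⟨x, hidx x, rfl⟩⟩).2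
      exact ⟨y, hy, hgy⟩
    choose h1 h1mem h1eq using H1
    have h1B : MemB P h1 α := by
      refine ⟨fun i x hx => ?_, hα⟩
      have h2' := h1mem x
      rwa [idx_eq hx] at h2'
    have hfk1 : ∀ x, f x = k (h1 x) := by
      intro x
      have p : g (h1 x) ∈ g '' P (α (idx x)) := by
        rw [h1eq x]; exact (e (idx x) ⟨f x, ⟨x, hidx x, rfl⟩⟩).2
      rw [k_eval (h1 x) (idx x) (h1mem x) p]
      have hsub : (⟨g (h1 x), p⟩ : ↥(g '' P (α (idx x)))) =
          e (idx x) ⟨f x, ⟨x, hidx x, rfl⟩⟩ := Subtype.ext (h1eq x)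
      rw [hsub, Equiv.symm_apply_apply]
    have H2 : ∀ x : X, ∃ y, y ∈ P (ai (idx x)) ∧ f y = k x := by
      intro x
      obtain ⟨y, hy, hfy⟩ := kmem x
      exact ⟨y, hy, hfy⟩
    choose h2 h2mem h2eq using H2
    have h2B : MemB P h2 ai := by
      refine ⟨fun i x hx => ?_, hai⟩
      have h2' := h2mem x
      rwa [idx_eq hx] at h2'
    have hkf2 : ∀ x, k x = f (h2 x) := fun x => (h2eq x).symm
    have p3 : ∀ y : X, y ∈ g '' P (gi (idx y)) → y ∈ g '' P (α (ai (gi (idx y)))) := by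
      intro y hy
      rwa [air]
    let h3 : X → X := fun y =>
      if hy : y ∈ g '' P (gi (idx y)) then
        ↑((e (ai (gi (idx y)))).symm ⟨y, p3 y hy⟩)
      else (hne (χf (ai (gi (idx y))))).choose
    have h3B : MemB P h3 (fun m => χf (ai (gi m))) := by
      constructor
      · intro m y hy
        have hm : idx y = m := idx_eq hy
        show h3 y ∈ P (χf (ai (gi m)))
        rw [← hm]
        by_cases hc : y ∈ g '' P (gi (idx y))
        · simp only [h3, dif_pos hc]
          obtain ⟨x0, hx0, hfx0⟩ := ((e (ai (gi (idx y)))).symm ⟨y, p3 y hc⟩).2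
          rw [← hfx0]; exact hf.1 _ hx0
        · simp only [h3, dif_neg hc]
          exact (hne _).choose_spec
      · exact (hf.2.comp hai).comp hgi
    have h3_eval : ∀ (y : X) (i : I) (hy : y ∈ P (χg i)) (hmem : y ∈ g '' P i)
        (p : y ∈ g '' P (α (ai i))), h3 y = ↑((e (ai i)).symm ⟨y, p⟩) := by
      intro y i hy
      have h1' : gi (idx y) = i := by rw [idx_eq hy, gil]
      rw [← h1']
      intro hmem p
      simp only [h3, dif_pos hmem]
    have khg : ∀ x, k x = h3 (g x) := by
      intro x
      have hy : g x ∈ P (χg (idx x)) := hg.1 _ (hidx x)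
      have hmem : g x ∈ g '' P (idx x) := ⟨x, hidx x, rfl⟩
      rw [h3_eval (g x) (idx x) hy hmem (pf x)]
    let h4 : X → X := fun y =>
      if hy : y ∈ f '' P (fi (idx y)) then ↑(e (fi (idx y)) ⟨y, hy⟩)
      else (hne (χg (α (fi (idx y))))).choose
    have h4B : MemB P h4 (fun n => χg (α (fi n))) := by
      constructor
      · intro n y hy
        have hm : idx y = n := idx_eq hy
        show h4 y ∈ P (χg (α (fi n)))
        rw [← hm]
        by_cases hc : y ∈ f '' P (fi (idx y))
        · simp only [h4, dif_pos hc]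
          obtain ⟨x0, hx0, hgx0⟩ := (e (fi (idx y)) ⟨y, hc⟩).2
          rw [← hgx0]; exact hg.1 _ hx0
        · simp only [h4, dif_neg hc]
          exact (hne _).choose_spec
      · exact (hg.2.comp hα).comp hfi
    have h4_eval : ∀ (y : X) (i : I) (hy : y ∈ P (χf i)) (hmem : y ∈ f '' P i),
        h4 y = ↑(e i ⟨y, hmem⟩) := by
      intro y i hy
      have h1' : fi (idx y) = i := by rw [idx_eq hy, fil]
      rw [← h1']
      intro hmem
      simp only [h4, dif_pos hmem]
    have ghk : ∀ x, g x = h4 (k x) := by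
      intro x
      have hy : k x ∈ P (χf (ai (idx x))) := by
        obtain ⟨x0, hx0, hfx0⟩ := kmem x
        rw [← hfx0]; exact hf.1 _ hx0
      rw [h4_eval (k x) (ai (idx x)) hy (kmem x)]
      have hKx : (⟨k x, kmem x⟩ : ↥(f '' P (ai (idx x)))) = K x := rfl
      rw [hKx]
      show g x = ↑(e (ai (idx x)) ((e (ai (idx x))).symm ⟨g x, pf x⟩))
      rw [Equiv.apply_symm_apply]
    exact ⟨k, fun j => χf (ai j), hkB,
      ⟨h1, α, h2, ai, h1B, h2B, hfk1, hkf2⟩,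
      ⟨h3, _, h4, _, h3B, h4B, khg, ghk⟩⟩
end

section
/- Let f, g be in B(X,P). Then there exist h, h' in B(X,P) with f = hgh' (i.e. f(x) = h'(g(h(x))) for all x in X) if and only if there exists a bijection alpha : I -> I such that |f(X_i)| <= |g(X_{alpha(i)})| (as cardinals) for all i in I. -/
open Cardinal

/-- `J_f ≤ J_g` in `B(X,P)` iff there is a bijection `α` of `I` with
`|f '' (P i)| ≤ |g '' (P (α i))|` for all `i`. -/
theorem J_le_iff {X I : Type*} [Nonempty X] (P : I → Set X) (hP : IsPartition P)
    (f g : X → X) (χf χg : I → I) (hf : MemB P f χf) (hg : MemB P g χg) :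
    (∃ h χh h' χh', MemB P h χh ∧ MemB P h' χh' ∧ ∀ x, f x = h' (g (h x))) ↔
      ∃ α : I → I, Function.Bijective α ∧
        ∀ i, Cardinal.mk ↥(f '' (P i)) ≤ Cardinal.mk ↥(g '' (P (α i))) := by
  classical
  obtain ⟨hne, hdisj, hcov⟩ := hP
  choose idx hidx using hcov
  have huniq : ∀ {x : X} {i : I}, x ∈ P i → idx x = i := by
    intro x i hx
    by_contra hne'
    exact Set.disjoint_left.mp (hdisj hne') (hidx x) hx
  constructor
  · rintro ⟨h, χh, h', χh', ⟨hhm, hhb⟩, ⟨hh'm, _⟩, heq⟩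
    refine ⟨χh, hhb, fun i => ?_⟩
    have h1 : f '' P i ⊆ h' '' (g '' P (χh i)) := by
      rintro _ ⟨x, hx, rfl⟩
      exact ⟨g (h x), ⟨h x, hhm i hx, rfl⟩, (heq x).symm⟩
    calc Cardinal.mk ↥(f '' P i) ≤ Cardinal.mk ↥(h' '' (g '' P (χh i))) :=
          Cardinal.mk_le_mk_of_subset h1
      _ ≤ Cardinal.mk ↥(g '' P (χh i)) := Cardinal.mk_image_le
  · rintro ⟨α, hα, hcard⟩
    have φ : ∀ i, ↥(f '' P i) ↪ ↥(g '' P (α i)) :=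
      fun i => Classical.choice ((Cardinal.le_def _ _).mp (hcard i))
    have hmemf : ∀ x, f x ∈ f '' P (idx x) := fun x => ⟨x, hidx x, rfl⟩
    have hgsel : ∀ x, ∃ z, z ∈ P (α (idx x)) ∧ g z = (φ (idx x) ⟨f x, hmemf x⟩ : X) := by
      intro x
      obtain ⟨z, hz, hz'⟩ := (φ (idx x) ⟨f x, hmemf x⟩).2
      exact ⟨z, hz, hz'⟩
    choose h hh1 hh2 using hgsel
    set eα := Equiv.ofBijective α hα with heα
    set eg := Equiv.ofBijective χg hg.2 with heg
    set ι : I → I := fun j => eα.symm (eg.symm j) with hιdef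
    set h' : X → X := fun y =>
      if hy : ∃ s : ↥(f '' P (ι (idx y))), ((φ (ι (idx y)) s : X) = y) then (hy.choose : X)
      else (hne (χf (ι (idx y)))).choose
      with hh'
    refine ⟨h, α, h', fun j => χf (ι j), ⟨?_, hα⟩, ⟨?_, ?_⟩, ?_⟩
    · intro i x hx
      have := hh1 x
      rwa [huniq hx] at this
    · intro j y hy
      have hj : idx y = j := huniq hy
      subst hj
      rw [hh']
      simp only
      split
      · next hex =>
        have := hex.choose.2
        exact (hf.1 _).image_subset this
      · exact (hne (χf (ι (idx y)))).choose_spec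
    · have : (fun j => χf (ι j)) = χf ∘ (eg.symm.trans eα.symm) := rfl
      rw [this]
      exact hf.2.comp (eg.symm.trans eα.symm).bijective
    · intro x
      have hy1 : g (h x) = (φ (idx x) ⟨f x, hmemf x⟩ : X) := hh2 x
      have hymem : g (h x) ∈ P (χg (α (idx x))) := hg.1 _ (hh1 x)
      have hidxy : idx (g (h x)) = χg (α (idx x)) := huniq hymem
      have hι' : ι (idx (g (h x))) = idx x := by
        rw [hidxy]
        show eα.symm (eg.symm (χg (α (idx x)))) = idx x
        have h1 : χg (α (idx x)) = eg (α (idx x)) := rfl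
        rw [h1, Equiv.symm_apply_apply]
        show eα.symm (eα (idx x)) = idx x
        exact Equiv.symm_apply_apply _ _
      show f x = h' (g (h x))
      rw [hh']
      simp only
      rw [hι']
      have hex' : ∃ s : ↥(f '' P (idx x)), ((φ (idx x) s : X) = g (h x)) :=
        ⟨⟨f x, hmemf x⟩, hy1.symm⟩
      rw [dif_pos hex']
      have h2 : (φ (idx x)) hex'.choose = (φ (idx x)) ⟨f x, hmemf x⟩ := by
        apply Subtype.ext
        rw [hex'.choose_spec, hy1]
      have h3 := (φ (idx x)).injective h2
      rw [h3]
end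

section
/- Let f, g be in B(X,P). Then f and g are Green's J-related in B(X,P) (there exist h1, h2, h3, h4 in B(X,P) with f = h1 g h2 and g = h3 f h4, using left-to-right composition) if and only if there exist bijections alpha, beta : I -> I such that |f(X_i)| <= |g(X_{alpha(i)})| and |g(X_i)| <= |f(X_{beta(i)})| (as cardinals) for all i in I. -/
open Cardinal

/-- Construction of one half of the `J` relation from the cardinality data. -/
lemma construct_half {X I : Type*} (P : I → Set X) (hP : IsPartition P)
    (f g : X → X) (χf χg : I → I) (hf : MemB P f χf) (hg : MemB P g χg)
    (α : I → I) (hα : Function.Bijective α)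
    (hle : ∀ i, Cardinal.mk ↥(f '' (P i)) ≤ Cardinal.mk ↥(g '' (P (α i)))) :
    ∃ h1 χ1 h2 χ2, MemB P h1 χ1 ∧ MemB P h2 χ2 ∧ ∀ x, f x = h2 (g (h1 x)) := by
  classical
  obtain ⟨hne, hdisj, hcover⟩ := hP
  -- the (unique) index of the block containing `x`
  set idx : X → I := fun x => (hcover x).choose with hidxdef
  have hidx : ∀ x, x ∈ P (idx x) := fun x => (hcover x).choose_spec
  have hidx_eq : ∀ {x : X} {i : I}, x ∈ P i → idx x = i := by
    intro x i hx
    by_contra hne'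
    exact Set.disjoint_left.mp (hdisj hne') (hidx x) hx
  -- injections witnessing the cardinal inequalities
  have ι : ∀ i, ↥(f '' P i) ↪ ↥(g '' P (α i)) :=
    fun i => Classical.choice ((Cardinal.le_def _ _).mp (hle i))
  have hfx : ∀ x : X, f x ∈ f '' P (idx x) := fun x => ⟨x, hidx x, rfl⟩
  have hinj : Function.Injective (fun i => χg (α i)) := (hg.2.comp hα).injective
  set e : I ≃ I := Equiv.ofBijective (fun i => χg (α i)) (hg.2.comp hα) with hedef
  -- h1
  have hz : ∀ x : X, ∃ z, z ∈ P (α (idx x)) ∧ g z = ↑(ι (idx x) ⟨f x, hfx x⟩) :=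
    fun x => (ι (idx x) ⟨f x, hfx x⟩).2
  set h1 : X → X := fun x => (hz x).choose with h1def
  have hh1mem : ∀ x, h1 x ∈ P (α (idx x)) := fun x => (hz x).choose_spec.1
  have hh1g : ∀ x, g (h1 x) = ↑(ι (idx x) ⟨f x, hfx x⟩) := fun x => (hz x).choose_spec.2
  -- h2
  set Q : X → (Σ i, ↥(f '' P i)) → Prop :=
    fun y p => ↑(ι p.1 p.2) = y ∧ χg (α p.1) = idx y with hQ
  set h2 : X → X := fun y =>
    if h : ∃ p, Q y p then ↑h.choose.2
    else (hne (χf (e.symm (idx y)))).choose with h2def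
  refine ⟨h1, α, h2, fun j => χf (e.symm j), ⟨?_, hα⟩,
    ⟨?_, hf.2.comp e.symm.bijective⟩, ?_⟩
  · -- h1 maps P i into P (α i)
    intro i x hx
    have := hh1mem x
    rwa [hidx_eq hx] at this
  · -- h2 maps P j into P (χf (e.symm j))
    intro j y hy
    have hjy : idx y = j := hidx_eq hy
    simp only [h2def]
    split
    · rename_i h
      have hspec := h.choose_spec
      have hp1 : e h.choose.1 = j := by
        have : χg (α h.choose.1) = idx y := hspec.2
        rw [hjy] at this; exact this
      have hps : h.choose.1 = e.symm j := by
        rw [← hp1, Equiv.symm_apply_apply]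
      have hmem : ↑h.choose.2 ∈ P (χf h.choose.1) :=
        (hf.1 h.choose.1).image_subset h.choose.2.2
      rw [← hps]; exact hmem
    · rw [hjy]
      exact (hne (χf (e.symm j))).choose_spec
  · -- the factorization
    intro x
    have hy : g (h1 x) = ↑(ι (idx x) ⟨f x, hfx x⟩) := hh1g x
    have hymem : g (h1 x) ∈ P (χg (α (idx x))) := hg.1 (α (idx x)) (hh1mem x)
    have hidxy : idx (g (h1 x)) = χg (α (idx x)) := hidx_eq hymem
    have hex : ∃ p, Q (g (h1 x)) p :=
      ⟨⟨idx x, ⟨f x, hfx x⟩⟩, hy.symm, hidxy.symm⟩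
    have key : ∀ p : Σ i, ↥(f '' P i), Q (g (h1 x)) p → (p.2 : X) = f x := by
      rintro ⟨i', w'⟩ ⟨hp1, hp2⟩
      have hi : i' = idx x := hinj (hp2.trans hidxy)
      subst hi
      have hw : w' = ⟨f x, hfx x⟩ := (ι (idx x)).injective (Subtype.ext (hp1.trans hy))
      rw [hw]
    simp only [h2def]
    rw [dif_pos hex]
    exact (key hex.choose hex.choose_spec).symm

/-- `f J g` in `B(X,P)` iff there are bijections `α, β` of `I` with
`|f '' (P i)| ≤ |g '' (P (α i))|` and `|g '' (P i)| ≤ |f '' (P (β i))|` for all `i`. -/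
theorem J_iff {X I : Type*} [Nonempty X] (P : I → Set X) (hP : IsPartition P)
    (f g : X → X) (χf χg : I → I) (hf : MemB P f χf) (hg : MemB P g χg) :
    GreenJ P f g ↔
      ∃ α β : I → I, Function.Bijective α ∧ Function.Bijective β ∧
        ∀ i, Cardinal.mk ↥(f '' (P i)) ≤ Cardinal.mk ↥(g '' (P (α i))) ∧
          Cardinal.mk ↥(g '' (P i)) ≤ Cardinal.mk ↥(f '' (P (β i))) := by
  constructor
  · rintro ⟨⟨h1, χ1, h2, χ2, hm1, hm2, heq⟩, ⟨h3, χ3, h4, χ4, hm3, hm4, heq'⟩⟩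
    refine ⟨χ1, χ3, hm1.2, hm3.2, fun i => ⟨?_, ?_⟩⟩
    · calc Cardinal.mk ↥(f '' P i)
          = Cardinal.mk ↥((h2 ∘ g ∘ h1) '' P i) := by
            rw [show f '' P i = (h2 ∘ g ∘ h1) '' P i from
              Set.image_congr fun x _ => heq x]
        _ = Cardinal.mk ↥(h2 '' (g '' (h1 '' P i))) := by
            rw [Set.image_comp, Set.image_comp]
        _ ≤ Cardinal.mk ↥(g '' (h1 '' P i)) := Cardinal.mk_image_le
        _ ≤ Cardinal.mk ↥(g '' (P (χ1 i))) :=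
            Cardinal.mk_le_mk_of_subset (Set.image_mono ((hm1.1 i).image_subset))
    · calc Cardinal.mk ↥(g '' P i)
          = Cardinal.mk ↥((h4 ∘ f ∘ h3) '' P i) := by
            rw [show g '' P i = (h4 ∘ f ∘ h3) '' P i from
              Set.image_congr fun x _ => heq' x]
        _ = Cardinal.mk ↥(h4 '' (f '' (h3 '' P i))) := by
            rw [Set.image_comp, Set.image_comp]
        _ ≤ Cardinal.mk ↥(f '' (h3 '' P i)) := Cardinal.mk_image_le
        _ ≤ Cardinal.mk ↥(f '' (P (χ3 i))) :=
            Cardinal.mk_le_mk_of_subset (Set.image_mono ((hm3.1 i).image_subset))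
  · rintro ⟨α, β, hα, hβ, h⟩
    exact ⟨construct_half P hP f g χf χg hf hg α hα fun i => (h i).1,
      construct_half P hP g f χg χf hg hf β hβ fun i => (h i).2⟩
end

section
/- If the index set I is finite (equivalently, the partition P is finite), then Green's relations D and J coincide on B(X,P): for all f, g in B(X,P), f D g if and only if f J g. -/
open Cardinal

section Aux

variable {X I : Type*}

lemma IsPartition.block_eq {P : I → Set X} (hP : IsPartition P) {x : X} {i j : I}
    (hi : x ∈ P i) (hj : x ∈ P j) : i = j := by
  by_contra h
  exact Set.disjoint_left.mp (hP.2.1 h) hi hj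

/-- The index of the block containing `x`. -/
noncomputable def blkOf {P : I → Set X} (hP : IsPartition P) (x : X) : I :=
  (hP.2.2 x).choose

lemma blkOf_mem {P : I → Set X} (hP : IsPartition P) (x : X) : x ∈ P (blkOf hP x) :=
  (hP.2.2 x).choose_spec

lemma blkOf_eq {P : I → Set X} (hP : IsPartition P) {x : X} {i : I} (hx : x ∈ P i) :
    blkOf hP x = i := hP.block_eq (blkOf_mem hP x) hx

lemma perm_card_stable {I : Type*} [Finite I] (e : Equiv.Perm I) (a : I → Cardinal)
    (h : ∀ i, a i ≤ a (e i)) : ∀ i, a i = a (e i) := by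
  have key : ∀ k i, a i ≤ a ((e ^ k) i) := by
    intro k
    induction k with
    | zero => intro i; simp
    | succ n ih =>
      intro i
      have : (e ^ (n + 1)) i = (e ^ n) (e i) := by
        rw [pow_succ, Equiv.Perm.mul_apply]
      rw [this]
      exact (h i).trans (ih (e i))
  intro i
  have hfin : IsOfFinOrder e := isOfFinOrder_of_finite e
  have hpos : 0 < orderOf e := hfin.orderOf_pos
  refine le_antisymm (h i) ?_
  have h1 : a (e i) ≤ a ((e ^ (orderOf e - 1)) (e i)) := key _ _
  have h2 : (e ^ (orderOf e - 1)) (e i) = i := by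
    have he : e ^ orderOf e = e ^ (orderOf e - 1) * e := by
      rw [← pow_succ, Nat.sub_add_cancel hpos]
    have : (e ^ orderOf e) i = i := by rw [pow_orderOf_eq_one]; rfl
    rw [he, Equiv.Perm.mul_apply] at this
    exact this
  rwa [h2] at h1

end Aux
/-- If the partition `P` is finite then `D = J` on `B(X,P)`. -/
theorem D_eq_J_of_finite {X I : Type*} [Nonempty X] [Finite I] (P : I → Set X)
    (hP : IsPartition P) (f g : X → X) (χf χg : I → I)
    (hf : MemB P f χf) (hg : MemB P g χg) :
    GreenD P f g ↔ GreenJ P f g := by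
  classical
  have himg : ∀ (F : X → X) (χ : I → I), (∀ i, Set.MapsTo F (P i) (P (χ i))) →
      ∀ i, F '' P i ⊆ P (χ i) := fun F χ h i => Set.image_subset_iff.mpr (h i)
  constructor
  · -- D → J : easy composition
    rintro ⟨k, χk, hk, ⟨hL, χL, hL', χL', HL, HL', Ef1, Ek1⟩,
      ⟨hRR, χR, hR2, χR', HR, HR', Ek2, Eg2⟩⟩
    constructor
    · refine ⟨hL, χL, hRR, χR, HL, HR, fun x => ?_⟩
      rw [Ef1 x]; exact Ek2 (hL x)
    · refine ⟨hL', χL', hR2, χR', HL', HR', fun x => ?_⟩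
      rw [Eg2 x, Ek1 x]
  · -- J → D : the hard direction
    rintro ⟨⟨h1, χ1, h2, χ2, H1, H2, Ef⟩, ⟨h3, χ3, h4, χ4, H3, H4, Eg⟩⟩
    set e1 : I ≃ I := Equiv.ofBijective χ1 H1.2 with he1
    set e3 : I ≃ I := Equiv.ofBijective χ3 H3.2 with he3
    set ef : I ≃ I := Equiv.ofBijective χf hf.2 with hef
    set eg : I ≃ I := Equiv.ofBijective χg hg.2 with heg
    -- cardinal inequalities
    have hfg : ∀ i, (#(f '' P i)) ≤ #(g '' P (χ1 i)) := by
      intro i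
      have hsub : f '' P i ⊆ h2 '' (g '' P (χ1 i)) := by
        rintro _ ⟨x, hx, rfl⟩
        exact ⟨g (h1 x), ⟨h1 x, H1.1 i hx, rfl⟩, (Ef x).symm⟩
      exact (Cardinal.mk_le_mk_of_subset hsub).trans Cardinal.mk_image_le
    have hgf : ∀ j, (#(g '' P j)) ≤ #(f '' P (χ3 j)) := by
      intro j
      have hsub : g '' P j ⊆ h4 '' (f '' P (χ3 j)) := by
        rintro _ ⟨x, hx, rfl⟩
        exact ⟨f (h3 x), ⟨h3 x, H3.1 j hx, rfl⟩, (Eg x).symm⟩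
      exact (Cardinal.mk_le_mk_of_subset hsub).trans Cardinal.mk_image_le
    -- cycling: equality of cardinals along the permutation χ1
    have hcard : ∀ i, (#(f '' P i)) = #(g '' P (χ1 i)) := by
      intro i
      have hmono : ∀ i, (#(f '' P i)) ≤ #(f '' P ((e1.trans e3) i)) :=
        fun i => (hfg i).trans (hgf (χ1 i))
      have := perm_card_stable (e1.trans e3) (fun i => #(f '' P i)) hmono i
      exact le_antisymm (hfg i) ((hgf (χ1 i)).trans this.symm.le)
    -- the bijections between image pieces
    have hγ : ∀ i, Nonempty ((f '' P i) ≃ (g '' P (χ1 i))) :=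
      fun i => Cardinal.eq.mp (hcard i)
    set γ : ∀ i, (f '' P i) ≃ (g '' P (χ1 i)) := fun i => (hγ i).some with hγdef
    -- membership helper
    have e1app : ∀ j, χ1 (e1.symm j) = j := fun j => e1.apply_symm_apply j
    have hmemk : ∀ x : X, g x ∈ g '' P (χ1 (e1.symm (blkOf hP x))) := by
      intro x
      refine ⟨x, ?_, rfl⟩
      rw [e1app]
      exact blkOf_mem hP x
    -- define k
    have exk : ∀ x : X,
        ∃ w : X, w = ((γ (e1.symm (blkOf hP x))).symm ⟨g x, hmemk x⟩ : X) :=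
      fun x => ⟨_, rfl⟩
    choose k kdef using exk
    have hkmem : ∀ x, k x ∈ f '' P (e1.symm (blkOf hP x)) := by
      intro x; rw [kdef x]; exact Subtype.coe_prop _
    have hk_spec : ∀ (i : I) (x : X), x ∈ P (χ1 i) →
        ∀ (hm : g x ∈ g '' P (χ1 i)), k x = ((γ i).symm ⟨g x, hm⟩ : X) := by
      intro i x hx hm
      have hb : e1.symm (blkOf hP x) = i := by
        rw [blkOf_eq hP hx]; exact e1.symm_apply_apply i
      subst hb
      exact kdef x
    -- k ∈ B
    have hkB : MemB P k (fun j => χf (e1.symm j)) := by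
      constructor
      · intro j x hx
        have := hkmem x
        rw [blkOf_eq hP hx] at this
        exact himg f χf hf.1 _ this
      · exact (e1.symm.trans ef).bijective
    -- GreenL P f k
    have exL : ∀ x : X, ∃ y, y ∈ P (χ1 (blkOf hP x)) ∧
        g y = ((γ (blkOf hP x)) ⟨f x, ⟨x, blkOf_mem hP x, rfl⟩⟩ : X) := by
      intro x
      obtain ⟨y, hy, hgy⟩ := ((γ (blkOf hP x)) ⟨f x, ⟨x, blkOf_mem hP x, rfl⟩⟩).2
      exact ⟨y, hy, hgy⟩
    choose hL hL1 hL2 using exL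
    have HLmem : MemB P hL χ1 := by
      refine ⟨fun i x hx => ?_, H1.2⟩
      have := hL1 x
      rwa [blkOf_eq hP hx] at this
    have EfL : ∀ x, f x = k (hL x) := by
      intro x
      have hy : hL x ∈ P (χ1 (blkOf hP x)) := hL1 x
      have hm : g (hL x) ∈ g '' P (χ1 (blkOf hP x)) := ⟨hL x, hy, rfl⟩
      rw [hk_spec (blkOf hP x) (hL x) hy hm]
      have h3' : (⟨g (hL x), hm⟩ : (g '' P (χ1 (blkOf hP x)))) =
          (γ (blkOf hP x)) ⟨f x, ⟨x, blkOf_mem hP x, rfl⟩⟩ := Subtype.ext (hL2 x)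
      rw [h3', Equiv.symm_apply_apply]
    have exL' : ∀ x : X, ∃ y, y ∈ P (e1.symm (blkOf hP x)) ∧ f y = k x := by
      intro x
      obtain ⟨y, hy, hfy⟩ := hkmem x
      exact ⟨y, hy, hfy⟩
    choose hL' hL'1 hL'2 using exL'
    have HL'mem : MemB P hL' (fun j => e1.symm j) := by
      refine ⟨fun j x hx => ?_, e1.symm.bijective⟩
      have := hL'1 x
      rwa [blkOf_eq hP hx] at this
    have hGreenL : GreenL P f k :=
      ⟨hL, χ1, hL', fun j => e1.symm j, HLmem, HL'mem, EfL, fun x => (hL'2 x).symm⟩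
    -- GreenR P k g
    have exR : ∀ z : X, ∃ w, w ∈ f '' P (e1.symm (eg.symm (blkOf hP z))) ∧
        ∀ (hz : z ∈ g '' P (χ1 (e1.symm (eg.symm (blkOf hP z))))),
          w = ((γ (e1.symm (eg.symm (blkOf hP z)))).symm ⟨z, hz⟩ : X) := by
      intro z
      by_cases hz : z ∈ g '' P (χ1 (e1.symm (eg.symm (blkOf hP z))))
      · exact ⟨_, Subtype.coe_prop ((γ _).symm ⟨z, hz⟩), fun hz' => rfl⟩
      · exact ⟨f (hP.1 (e1.symm (eg.symm (blkOf hP z)))).choose,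
          ⟨_, (hP.1 _).choose_spec, rfl⟩, fun hz' => absurd hz' hz⟩
    choose hR hRmem hRspec using exR
    have HRmem : MemB P hR (fun m => χf (e1.symm (eg.symm m))) := by
      constructor
      · intro m z hz
        have := hRmem z
        rw [blkOf_eq hP hz] at this
        exact himg f χf hf.1 _ this
      · exact ((eg.symm.trans e1.symm).trans ef).bijective
    have hR_spec' : ∀ (i : I) (z : X), z ∈ P (χg (χ1 i)) →
        ∀ (hz : z ∈ g '' P (χ1 i)), hR z = ((γ i).symm ⟨z, hz⟩ : X) := by
      intro i z hzm hz
      have hb : e1.symm (eg.symm (blkOf hP z)) = i := by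
        rw [blkOf_eq hP hzm]
        have hq : eg.symm (χg (χ1 i)) = χ1 i := eg.symm_apply_apply (χ1 i)
        rw [hq]
        exact e1.symm_apply_apply i
      subst hb
      exact hRspec z hz
    have EkR : ∀ x, k x = hR (g x) := by
      intro x
      have hx' : x ∈ P (χ1 (e1.symm (blkOf hP x))) := by
        rw [e1app]; exact blkOf_mem hP x
      have hgx : g x ∈ P (χg (χ1 (e1.symm (blkOf hP x)))) := hg.1 _ hx'
      rw [hR_spec' (e1.symm (blkOf hP x)) (g x) hgx (hmemk x)]
      exact kdef x
    -- hR' with g x = hR' (k x)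
    have exR' : ∀ w : X, ∃ z,
        (∀ (hw : w ∈ f '' P (ef.symm (blkOf hP w))),
          z = ((γ (ef.symm (blkOf hP w))) ⟨w, hw⟩ : X)) ∧
        z ∈ P (χg (χ1 (ef.symm (blkOf hP w)))) := by
      intro w
      by_cases hw : w ∈ f '' P (ef.symm (blkOf hP w))
      · refine ⟨((γ (ef.symm (blkOf hP w))) ⟨w, hw⟩ : X), fun hw' => rfl, ?_⟩
        obtain ⟨y, hy, hgy⟩ := Subtype.coe_prop ((γ (ef.symm (blkOf hP w))) ⟨w, hw⟩)
        rw [← hgy]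
        exact hg.1 _ hy
      · refine ⟨g (hP.1 (χ1 (ef.symm (blkOf hP w)))).choose, fun hw' => absurd hw' hw, ?_⟩
        exact hg.1 _ (hP.1 _).choose_spec
    choose hR' hR'spec hR'mem using exR'
    have HR'mem : MemB P hR' (fun m => χg (χ1 (ef.symm m))) := by
      constructor
      · intro m w hw
        have := hR'mem w
        rwa [blkOf_eq hP hw] at this
      · exact ((ef.symm.trans e1).trans eg).bijective
    have hR'_spec' : ∀ (i : I) (w : X), w ∈ P (χf i) →
        ∀ (hw : w ∈ f '' P i), hR' w = ((γ i) ⟨w, hw⟩ : X) := by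
      intro i w hwm hw
      have hb : ef.symm (blkOf hP w) = i := by
        rw [blkOf_eq hP hwm]; exact ef.symm_apply_apply i
      subst hb
      exact hR'spec w hw
    have EgR : ∀ x, g x = hR' (k x) := by
      intro x
      have hw : k x ∈ f '' P (e1.symm (blkOf hP x)) := hkmem x
      have hwm : k x ∈ P (χf (e1.symm (blkOf hP x))) := himg f χf hf.1 _ hw
      rw [hR'_spec' (e1.symm (blkOf hP x)) (k x) hwm hw]
      have h3' : (⟨k x, hw⟩ : (f '' P (e1.symm (blkOf hP x)))) =
          (γ (e1.symm (blkOf hP x))).symm ⟨g x, hmemk x⟩ := Subtype.ext (kdef x)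
      rw [h3', Equiv.apply_symm_apply]
    have hGreenR : GreenR P k g :=
      ⟨hR, fun m => χf (e1.symm (eg.symm m)), hR', fun m => χg (χ1 (ef.symm m)),
        HRmem, HR'mem, EkR, EgR⟩
    exact ⟨k, fun j => χf (e1.symm j), hkB, hGreenL, hGreenR⟩
end

section
/- If the set J = {i in I : |X_i| >= 3} is infinite, then Green's relations D and J do not coincide on B(X,P): there exist f, g in B(X,P) with f J g but not f D g. -/
open Cardinal

noncomputable section DJAux
open Classical
variable {X I : Type*}

def mkMap (j : ℕ → I) (idx : X → I) (b : ℕ → X → X) (d : X → X) : X → X :=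
  fun x => if h : ∃ n, j n = idx x then b h.choose x else d x

def mkChi (j : ℕ → I) (s : ℕ → ℕ) : I → I :=
  fun i => if h : ∃ n, j n = i then j (s h.choose) else i

theorem mkMap_eval {j : ℕ → I} (hj : Function.Injective j) {idx : X → I}
    {b : ℕ → X → X} {d : X → X} {x : X} {n : ℕ}
    (hx : idx x = j n) : mkMap j idx b d x = b n x := by
  unfold mkMap
  rw [hx, dif_pos ⟨n, rfl⟩]
  exact congrArg (fun t => b t x) (hj (Exists.choose_spec (⟨n, rfl⟩ : ∃ m, j m = j n)))

theorem mkMap_off {j : ℕ → I} {idx : X → I} {b : ℕ → X → X} {d : X → X} {x : X}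
    (h : ¬ ∃ n, j n = idx x) : mkMap j idx b d x = d x := dif_neg h

theorem mkChi_eval {j : ℕ → I} (hj : Function.Injective j) {s : ℕ → ℕ} (n : ℕ) :
    mkChi j s (j n) = j (s n) := by
  unfold mkChi
  rw [dif_pos ⟨n, rfl⟩]
  exact congrArg (fun t => j (s t)) (hj (Exists.choose_spec (⟨n, rfl⟩ : ∃ m, j m = j n)))

theorem mkChi_off {j : ℕ → I} {s : ℕ → ℕ} {i : I} (h : ¬ ∃ n, j n = i) :
    mkChi j s i = i := dif_neg h

theorem mkChi_bij {j : ℕ → I} (hj : Function.Injective j) {s t : ℕ → ℕ}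
    (hts : ∀ n, t (s n) = n) (hst : ∀ n, s (t n) = n) :
    Function.Bijective (mkChi j s) := by
  refine Function.bijective_iff_has_inverse.mpr ⟨mkChi j t, ?_, ?_⟩ <;> intro i <;>
    by_cases h : ∃ n, j n = i
  · obtain ⟨n, rfl⟩ := h
    rw [mkChi_eval hj, mkChi_eval hj, hts]
  · rw [mkChi_off h, mkChi_off h]
  · obtain ⟨n, rfl⟩ := h
    rw [mkChi_eval hj, mkChi_eval hj, hst]
  · rw [mkChi_off h, mkChi_off h]

end DJAux

/-- If infinitely many blocks of `P` have at least three elements, then `D ≠ J`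
on `B(X,P)`. -/
theorem D_ne_J_of_infinite {X I : Type*} [Nonempty X] (P : I → Set X)
    (hP : IsPartition P)
    (hJ : {i : I | 3 ≤ Cardinal.mk ↥(P i)}.Infinite) :
    ∃ f χf g χg, MemB P f χf ∧ MemB P g χg ∧ GreenJ P f g ∧ ¬ GreenD P f g := by
  classical
  obtain ⟨hne, hdisj, hcover⟩ := hP
  have block_eq : ∀ {i i' : I} {x : X}, x ∈ P i → x ∈ P i' → i = i' := by
    intro i i' x hx hx'
    by_contra hcon
    exact Set.disjoint_left.mp (hdisj hcon) hx hx'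
  choose idx hidx using hcover
  have hidx_eq : ∀ {i : I} {x : X}, x ∈ P i → idx x = i := fun hx => block_eq (hidx _) hx
  choose pt hpt using hne
  -- the sequence of big blocks
  set e := hJ.natEmbedding with he_def
  set j : ℕ → I := fun n => (e n : I) with hj_def
  have hj : Function.Injective j := fun a b hab => by
    have := e.injective (Subtype.ext hab); exact this
  have hbig : ∀ n, 3 ≤ #(P (j n)) := fun n => (e n).2
  have key : ∀ n, ∃ a b c : X, a ∈ P (j n) ∧ b ∈ P (j n) ∧ c ∈ P (j n) ∧
      a ≠ b ∧ a ≠ c ∧ b ≠ c := by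
    intro n
    have hnonempty : Nonempty ↥(P (j n)) := ⟨⟨pt (j n), hpt (j n)⟩⟩
    obtain ⟨a⟩ := hnonempty
    obtain ⟨b, hba, -⟩ := Cardinal.three_le (hbig n) a a
    obtain ⟨c, hca, hcb⟩ := Cardinal.three_le (hbig n) a b
    exact ⟨a.1, b.1, c.1, a.2, b.2, c.2,
      fun h => hba (Subtype.ext h.symm),
      fun h => hca (Subtype.ext h.symm),
      fun h => hcb (Subtype.ext h.symm)⟩
  choose u v w hu hv hw huv huw hvw using key
  -- the permutation of ℕ
  set al : ℕ → ℕ := fun n => if n % 3 = 0 then n / 2 else if n % 3 = 1 then 2 * n else 2 * n + 1 with hal_def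
  set ar : ℕ → ℕ := fun n => if n % 3 = 0 then 2 * n else if n % 3 = 1 then 2 * n + 1 else n / 2 with har_def
  have hral : ∀ n, ar (al n) = n := by
    intro n; simp only [hal_def, har_def]; split_ifs <;> omega
  have hlar : ∀ n, al (ar n) = n := by
    intro n; simp only [hal_def, har_def]; split_ifs <;> omega
  -- block-level maps
  set fb : ℕ → X → X := fun n x =>
    if n % 3 = 0 then u n
    else if n % 3 = 1 then (if x = u n then u n else v n)
    else (if x = u n then u n else if x = v n then v n else w n) with hfb_def
  set gb : ℕ → X → X := fun n x =>
    if n % 3 = 2 then (if x = u n then u n else if x = v n then v n else w n)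
    else u n with hgb_def
  set h1b : ℕ → X → X := fun n x =>
    if n % 3 = 0 then u (al n)
    else if n % 3 = 1 then (if x = u n then u (al n) else v (al n))
    else (if x = u n then u (al n) else if x = v n then v (al n) else w (al n)) with h1b_def
  set h2b : ℕ → X → X := fun m x =>
    if m % 3 = 2 then
      (if (ar m) % 3 = 1 then (if x = u m then u (ar m) else v (ar m))
       else (if x = u m then u (ar m) else if x = v m then v (ar m) else w (ar m)))
    else u (ar m) with h2b_def
  set h3b : ℕ → X → X := fun n x => if n % 3 = 1 then u n else x with h3b_def
  set f : X → X := mkMap j idx fb (fun x => pt (idx x)) with hf_def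
  set g : X → X := mkMap j idx gb (fun x => pt (idx x)) with hg_def
  set h1 : X → X := mkMap j idx h1b id with hh1_def
  set h2 : X → X := mkMap j idx h2b id with hh2_def
  set h3 : X → X := mkMap j idx h3b id with hh3_def
  set χ1 : I → I := mkChi j al with hχ1_def
  set χ2 : I → I := mkChi j ar with hχ2_def
  -- membership lemmas
  have fb_mem : ∀ n x, fb n x ∈ P (j n) := by
    intro n x; simp only [hfb_def]
    split_ifs <;> first | exact hu n | exact hv n | exact hw n
  have gb_mem : ∀ n x, gb n x ∈ P (j n) := by
    intro n x; simp only [hgb_def]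
    split_ifs <;> first | exact hu n | exact hv n | exact hw n
  have h1b_mem : ∀ n x, h1b n x ∈ P (j (al n)) := by
    intro n x; simp only [h1b_def]
    split_ifs <;> first | exact hu _ | exact hv _ | exact hw _
  have h2b_mem : ∀ m x, h2b m x ∈ P (j (ar m)) := by
    intro m x; simp only [h2b_def]
    split_ifs <;> first | exact hu _ | exact hv _ | exact hw _
  have h3b_mem : ∀ n x, x ∈ P (j n) → h3b n x ∈ P (j n) := by
    intro n x hx; simp only [h3b_def]
    split_ifs <;> first | exact hu _ | exact hx
  -- evaluation lemmas
  have f_eval : ∀ {n : ℕ} {x : X}, x ∈ P (j n) → f x = fb n x :=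
    fun hx => mkMap_eval hj (hidx_eq hx)
  have g_eval : ∀ {n : ℕ} {x : X}, x ∈ P (j n) → g x = gb n x :=
    fun hx => mkMap_eval hj (hidx_eq hx)
  have h1_eval : ∀ {n : ℕ} {x : X}, x ∈ P (j n) → h1 x = h1b n x :=
    fun hx => mkMap_eval hj (hidx_eq hx)
  have h2_eval : ∀ {n : ℕ} {x : X}, x ∈ P (j n) → h2 x = h2b n x :=
    fun hx => mkMap_eval hj (hidx_eq hx)
  have h3_eval : ∀ {n : ℕ} {x : X}, x ∈ P (j n) → h3 x = h3b n x :=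
    fun hx => mkMap_eval hj (hidx_eq hx)
  have f_off : ∀ {i : I} {x : X}, x ∈ P i → (¬ ∃ n, j n = i) → f x = pt i := by
    intro i x hx hni
    have h' : ¬ ∃ n, j n = idx x := by rw [hidx_eq hx]; exact hni
    rw [hf_def]
    show mkMap j idx fb (fun x => pt (idx x)) x = pt i
    rw [mkMap_off h', hidx_eq hx]
  have g_off : ∀ {i : I} {x : X}, x ∈ P i → (¬ ∃ n, j n = i) → g x = pt i := by
    intro i x hx hni
    have h' : ¬ ∃ n, j n = idx x := by rw [hidx_eq hx]; exact hni
    rw [hg_def]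
    show mkMap j idx gb (fun x => pt (idx x)) x = pt i
    rw [mkMap_off h', hidx_eq hx]
  have h1_off : ∀ {i : I} {x : X}, x ∈ P i → (¬ ∃ n, j n = i) → h1 x = x := by
    intro i x hx hni
    have h' : ¬ ∃ n, j n = idx x := by rw [hidx_eq hx]; exact hni
    exact mkMap_off h'
  have h2_off : ∀ {i : I} {x : X}, x ∈ P i → (¬ ∃ n, j n = i) → h2 x = x := by
    intro i x hx hni
    have h' : ¬ ∃ n, j n = idx x := by rw [hidx_eq hx]; exact hni
    exact mkMap_off h'
  have h3_off : ∀ {i : I} {x : X}, x ∈ P i → (¬ ∃ n, j n = i) → h3 x = x := by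
    intro i x hx hni
    have h' : ¬ ∃ n, j n = idx x := by rw [hidx_eq hx]; exact hni
    exact mkMap_off h'
  -- MapsTo lemmas
  have f_maps : ∀ i, Set.MapsTo f (P i) (P i) := by
    intro i x hx
    by_cases hi : ∃ n, j n = i
    · obtain ⟨n, rfl⟩ := hi
      rw [f_eval hx]; exact fb_mem n x
    · rw [f_off hx hi]; exact hpt i
  have g_maps : ∀ i, Set.MapsTo g (P i) (P i) := by
    intro i x hx
    by_cases hi : ∃ n, j n = i
    · obtain ⟨n, rfl⟩ := hi
      rw [g_eval hx]; exact gb_mem n x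
    · rw [g_off hx hi]; exact hpt i
  have h3_maps : ∀ i, Set.MapsTo h3 (P i) (P i) := by
    intro i x hx
    by_cases hi : ∃ n, j n = i
    · obtain ⟨n, rfl⟩ := hi
      rw [h3_eval hx]; exact h3b_mem n x hx
    · rw [h3_off hx hi]; exact hx
  have h1_maps : ∀ i, Set.MapsTo h1 (P i) (P (χ1 i)) := by
    intro i x hx
    by_cases hi : ∃ n, j n = i
    · obtain ⟨n, rfl⟩ := hi
      rw [h1_eval hx, hχ1_def, mkChi_eval hj]; exact h1b_mem n x
    · rw [h1_off hx hi, hχ1_def, mkChi_off hi]; exact hx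
  have h2_maps : ∀ i, Set.MapsTo h2 (P i) (P (χ2 i)) := by
    intro i x hx
    by_cases hi : ∃ n, j n = i
    · obtain ⟨n, rfl⟩ := hi
      rw [h2_eval hx, hχ2_def, mkChi_eval hj]; exact h2b_mem n x
    · rw [h2_off hx hi, hχ2_def, mkChi_off hi]; exact hx
  have χ1_bij : Function.Bijective χ1 := mkChi_bij hj hral hlar
  have χ2_bij : Function.Bijective χ2 := mkChi_bij hj hlar hral
  -- J equation 2 : g = f ∘ h3
  have eq2 : ∀ x, g x = f (h3 x) := by
    intro x
    by_cases hi : ∃ n, j n = idx x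
    · obtain ⟨n, hn⟩ := hi
      have hx : x ∈ P (j n) := hn ▸ hidx x
      rw [g_eval hx, h3_eval hx]
      by_cases h0 : n % 3 = 1
      · have h3bx : h3b n x = u n := by simp only [h3b_def]; rw [if_pos h0]
        rw [h3bx, f_eval (hu n)]
        simp only [hgb_def, hfb_def]
        rw [if_neg (by omega : ¬ n % 3 = 2), if_neg (by omega : ¬ n % 3 = 0), if_pos h0,
          if_pos trivial]
      · have h3bx : h3b n x = x := by simp only [h3b_def]; rw [if_neg h0]
        rw [h3bx, f_eval hx]
        simp only [hgb_def, hfb_def]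
        by_cases h2' : n % 3 = 2
        · rw [if_pos h2', if_neg (by omega : ¬ n % 3 = 0), if_neg h0]
        · rw [if_neg h2', if_pos (by omega : n % 3 = 0)]
    · have hx := hidx x
      rw [h3_off hx hi, g_off hx hi, f_off hx hi]
  -- J equation 1 : f = h2 ∘ g ∘ h1
  have eq1 : ∀ x, f x = h2 (g (h1 x)) := by
    intro x
    by_cases hi : ∃ n, j n = idx x
    · obtain ⟨n, hn⟩ := hi
      have hx : x ∈ P (j n) := hn ▸ hidx x
      rw [f_eval hx, h1_eval hx]
      have h3cases : n % 3 = 0 ∨ n % 3 = 1 ∨ n % 3 = 2 := by omega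
      rcases h3cases with h0 | h0 | h0
      · -- n % 3 = 0
        have e1 : h1b n x = u (al n) := by simp only [h1b_def]; rw [if_pos h0]
        have hm : ¬ al n % 3 = 2 := by simp only [hal_def]; rw [if_pos h0]; omega
        rw [e1, g_eval (hu (al n))]
        have e2 : gb (al n) (u (al n)) = u (al n) := by simp only [hgb_def]; rw [if_neg hm]
        rw [e2, h2_eval (hu (al n))]
        have e3 : h2b (al n) (u (al n)) = u (ar (al n)) := by
          simp only [h2b_def]; rw [if_neg hm]
        rw [e3, hral]
        simp only [hfb_def]; rw [if_pos h0]
      · -- n % 3 = 1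
        have hm : al n % 3 = 2 := by
          simp only [hal_def]; rw [if_neg (by omega : ¬ n % 3 = 0), if_pos h0]; omega
        have harn : ar (al n) = n := hral n
        by_cases hxu : x = u n
        · have e1 : h1b n x = u (al n) := by
            simp only [h1b_def]; rw [if_neg (by omega : ¬ n % 3 = 0), if_pos h0, if_pos hxu]
          rw [e1, g_eval (hu (al n))]
          have e2 : gb (al n) (u (al n)) = u (al n) := by
            simp only [hgb_def]; rw [if_pos hm, if_pos trivial]
          rw [e2, h2_eval (hu (al n))]
          have e3 : h2b (al n) (u (al n)) = u n := by
            simp only [h2b_def]; rw [if_pos hm, harn, if_pos h0, if_pos trivial]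
          rw [e3]
          simp only [hfb_def]; rw [if_neg (by omega : ¬ n % 3 = 0), if_pos h0, if_pos hxu]
        · have e1 : h1b n x = v (al n) := by
            simp only [h1b_def]; rw [if_neg (by omega : ¬ n % 3 = 0), if_pos h0, if_neg hxu]
          rw [e1, g_eval (hv (al n))]
          have e2 : gb (al n) (v (al n)) = v (al n) := by
            simp only [hgb_def]; rw [if_pos hm, if_neg (Ne.symm (huv (al n))), if_pos trivial]
          rw [e2, h2_eval (hv (al n))]
          have e3 : h2b (al n) (v (al n)) = v n := by
            simp only [h2b_def]
            rw [if_pos hm, harn, if_pos h0, if_neg (Ne.symm (huv (al n)))]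
          rw [e3]
          simp only [hfb_def]; rw [if_neg (by omega : ¬ n % 3 = 0), if_pos h0, if_neg hxu]
      · -- n % 3 = 2
        have hm : al n % 3 = 2 := by
          simp only [hal_def]
          rw [if_neg (by omega : ¬ n % 3 = 0), if_neg (by omega : ¬ n % 3 = 1)]; omega
        have harn : ar (al n) = n := hral n
        have harn1 : ¬ ar (al n) % 3 = 1 := by rw [harn]; omega
        by_cases hxu : x = u n
        · have e1 : h1b n x = u (al n) := by
            simp only [h1b_def]
            rw [if_neg (by omega : ¬ n % 3 = 0), if_neg (by omega : ¬ n % 3 = 1), if_pos hxu]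
          rw [e1, g_eval (hu (al n))]
          have e2 : gb (al n) (u (al n)) = u (al n) := by
            simp only [hgb_def]; rw [if_pos hm, if_pos trivial]
          rw [e2, h2_eval (hu (al n))]
          have e3 : h2b (al n) (u (al n)) = u n := by
            simp only [h2b_def]; rw [if_pos hm, if_neg harn1, if_pos trivial, harn]
          rw [e3]
          simp only [hfb_def]
          rw [if_neg (by omega : ¬ n % 3 = 0), if_neg (by omega : ¬ n % 3 = 1), if_pos hxu]
        · by_cases hxv : x = v n
          · have e1 : h1b n x = v (al n) := by
              simp only [h1b_def]
              rw [if_neg (by omega : ¬ n % 3 = 0), if_neg (by omega : ¬ n % 3 = 1),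
                if_neg hxu, if_pos hxv]
            rw [e1, g_eval (hv (al n))]
            have e2 : gb (al n) (v (al n)) = v (al n) := by
              simp only [hgb_def]; rw [if_pos hm, if_neg (Ne.symm (huv (al n))), if_pos trivial]
            rw [e2, h2_eval (hv (al n))]
            have e3 : h2b (al n) (v (al n)) = v n := by
              simp only [h2b_def]
              rw [if_pos hm, if_neg harn1, if_neg (Ne.symm (huv (al n))), if_pos trivial, harn]
            rw [e3]
            simp only [hfb_def]
            rw [if_neg (by omega : ¬ n % 3 = 0), if_neg (by omega : ¬ n % 3 = 1),
              if_neg hxu, if_pos hxv]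
          · have e1 : h1b n x = w (al n) := by
              simp only [h1b_def]
              rw [if_neg (by omega : ¬ n % 3 = 0), if_neg (by omega : ¬ n % 3 = 1),
                if_neg hxu, if_neg hxv]
            rw [e1, g_eval (hw (al n))]
            have e2 : gb (al n) (w (al n)) = w (al n) := by
              simp only [hgb_def]
              rw [if_pos hm, if_neg (Ne.symm (huw (al n))), if_neg (Ne.symm (hvw (al n)))]
            rw [e2, h2_eval (hw (al n))]
            have e3 : h2b (al n) (w (al n)) = w n := by
              simp only [h2b_def]
              rw [if_pos hm, if_neg harn1, if_neg (Ne.symm (huw (al n))),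
                if_neg (Ne.symm (hvw (al n))), harn]
            rw [e3]
            simp only [hfb_def]
            rw [if_neg (by omega : ¬ n % 3 = 0), if_neg (by omega : ¬ n % 3 = 1),
              if_neg hxu, if_neg hxv]
    · have hx := hidx x
      rw [h1_off hx hi, g_off hx hi, h2_off (hpt (idx x)) hi, f_off hx hi]
  -- assemble GreenJ
  have memid : MemB P (id : X → X) (id : I → I) :=
    ⟨fun i => Set.mapsTo_id (P i), Function.bijective_id⟩
  have hGJ : GreenJ P f g :=
    ⟨⟨h1, χ1, h2, χ2, ⟨h1_maps, χ1_bij⟩, ⟨h2_maps, χ2_bij⟩, eq1⟩,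
     ⟨h3, id, id, id, ⟨h3_maps, Function.bijective_id⟩, memid, fun x => eq2 x⟩⟩
  -- the negation of GreenD
  have hND : ¬ GreenD P f g := by
    intro hD
    obtain ⟨k, χk, ⟨hkm, hkb⟩, hL, hR⟩ := hD
    obtain ⟨h, χh, h', χh', ⟨hhm, hhb⟩, ⟨hh'm, hh'b⟩, hfe, hke⟩ := hL
    obtain ⟨p, χp, q, χq, -, -, hk_eq, hg_eq⟩ := hR
    have hk_of_g : ∀ x y : X, g x = g y → k x = k y := by
      intro x y hxy; rw [hk_eq x, hk_eq y, hxy]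
    have hg_of_k : ∀ x y : X, k x = k y → g x = g y := by
      intro x y hxy; rw [hg_eq x, hg_eq y, hxy]
    have hfu1 : f (u 1) = u 1 := by
      rw [f_eval (hu 1)]; simp [hfb_def]
    have hfv1 : f (v 1) = v 1 := by
      rw [f_eval (hv 1)]; simp [hfb_def, Ne.symm (huv 1)]
    have frange : ∀ y, y ∈ P (j 1) → f y = u 1 ∨ f y = v 1 := by
      intro y hy; rw [f_eval hy]
      by_cases hc : y = u 1 <;> simp [hfb_def, hc]
    set i₂ := χh (j 1) with hi₂_def
    have hx₁ : h (u 1) ∈ P i₂ := hhm (j 1) (hu 1)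
    have hx₂ : h (v 1) ∈ P i₂ := hhm (j 1) (hv 1)
    have hk₁ : k (h (u 1)) = u 1 := (hfe (u 1)).symm.trans hfu1
    have hk₂ : k (h (v 1)) = v 1 := (hfe (v 1)).symm.trans hfv1
    have hgne : g (h (u 1)) ≠ g (h (v 1)) := by
      intro hcon
      have : u 1 = v 1 := by rw [← hk₁, ← hk₂]; exact hk_of_g _ _ hcon
      exact huv 1 this
    have hblock : ∃ n, i₂ = j n ∧ n % 3 = 2 := by
      by_cases hi : ∃ n, j n = i₂
      · obtain ⟨n, hn⟩ := hi
        refine ⟨n, hn.symm, ?_⟩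
        by_contra h2'
        apply hgne
        have e1 : g (h (u 1)) = gb n (h (u 1)) :=
          g_eval (show h (u 1) ∈ P (j n) by rw [hn]; exact hx₁)
        have e2 : g (h (v 1)) = gb n (h (v 1)) :=
          g_eval (show h (v 1) ∈ P (j n) by rw [hn]; exact hx₂)
        rw [e1, e2]; simp only [hgb_def]; rw [if_neg h2', if_neg h2']
      · exact absurd (by rw [g_off hx₁ hi, g_off hx₂ hi]) hgne
    obtain ⟨n, hn, hn2⟩ := hblock
    set i₃ := χh' i₂ with hi₃_def
    have hu1i₃ : u 1 ∈ P i₃ := by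
      have h1' : h' (h (u 1)) ∈ P i₃ := hh'm i₂ hx₁
      have hh2 : k (h (u 1)) = f (h' (h (u 1))) := hke (h (u 1))
      rw [hk₁] at hh2
      rw [hh2]
      exact f_maps i₃ h1'
    have hi₃1 : i₃ = j 1 := block_eq hu1i₃ (hu 1)
    have krange : ∀ z, z ∈ P i₂ → k z = u 1 ∨ k z = v 1 := by
      intro z hz
      have hz' : h' z ∈ P (j 1) := by rw [← hi₃1]; exact hh'm i₂ hz
      rw [hke z]
      exact frange _ hz'
    have hun : u n ∈ P i₂ := by rw [hn]; exact hu n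
    have hvn : v n ∈ P i₂ := by rw [hn]; exact hv n
    have hwn : w n ∈ P i₂ := by rw [hn]; exact hw n
    have hgu : g (u n) = u n := by
      rw [g_eval (hu n)]; simp only [hgb_def]; rw [if_pos hn2, if_pos trivial]
    have hgv : g (v n) = v n := by
      rw [g_eval (hv n)]; simp only [hgb_def]
      rw [if_pos hn2, if_neg (Ne.symm (huv n)), if_pos trivial]
    have hgw : g (w n) = w n := by
      rw [g_eval (hw n)]; simp only [hgb_def]
      rw [if_pos hn2, if_neg (Ne.symm (huw n)), if_neg (Ne.symm (hvw n))]
    have kuv : k (u n) ≠ k (v n) := fun hc =>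
      huv n (by rw [← hgu, ← hgv]; exact hg_of_k _ _ hc)
    have kuw : k (u n) ≠ k (w n) := fun hc =>
      huw n (by rw [← hgu, ← hgw]; exact hg_of_k _ _ hc)
    have kvw : k (v n) ≠ k (w n) := fun hc =>
      hvw n (by rw [← hgv, ← hgw]; exact hg_of_k _ _ hc)
    rcases krange _ hun with h₁ | h₁ <;> rcases krange _ hvn with h₂ | h₂ <;>
      rcases krange _ hwn with h₃ | h₃ <;>
      first
        | exact kuv (h₁.trans h₂.symm)
        | exact kuw (h₁.trans h₃.symm)
        | exact kvw (h₂.trans h₃.symm)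
  exact ⟨f, id, g, id, ⟨fun i => f_maps i, Function.bijective_id⟩,
    ⟨fun i => g_maps i, Function.bijective_id⟩, hGJ, hND⟩
end

section
/- Let f be in B(X,P). If there exists a cardinal lambda1 with successor lambda2 = lambda1 + 1 such that for every i in I the cardinal |f(X_i)| belongs to {lambda1, lambda2}, then the D-class and the J-class of f in B(X,P) coincide: for every g in B(X,P), f J g if and only if f D g. -/
open Cardinal

namespace BXP

variable {X I : Type*} {P : I → Set X}

lemma eq_of_mem (hP : IsPartition P) {x : X} {i j : I} (hi : x ∈ P i) (hj : x ∈ P j) :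
    i = j := by
  by_contra h
  exact Set.disjoint_left.mp (hP.2.1 h) hi hj

noncomputable def idx (hP : IsPartition P) (x : X) : I := (hP.2.2 x).choose

lemma mem_idx (hP : IsPartition P) (x : X) : x ∈ P (idx hP x) := (hP.2.2 x).choose_spec

lemma idx_eq (hP : IsPartition P) {x : X} {i : I} (hi : x ∈ P i) : idx hP x = i :=
  eq_of_mem hP (mem_idx hP x) hi

/-- Factorization lemma for `L`: if the block images of `f` match those of `k`
via a bijection `σ`, then `f` factors as `f = k ∘ h` with `h ∈ B`. -/
lemma factorL (hP : IsPartition P) (f k : X → X) (σ : I ≃ I)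
    (him : ∀ i, f '' P i = k '' P (σ i)) :
    ∃ h χh, MemB P h χh ∧ ∀ x, f x = k (h x) := by
  have key : ∀ x : X, ∃ z, z ∈ P (σ (idx hP x)) ∧ k z = f x := by
    intro x
    have : f x ∈ k '' P (σ (idx hP x)) := by
      rw [← him]; exact ⟨x, mem_idx hP x, rfl⟩
    obtain ⟨z, hz, hzk⟩ := this
    exact ⟨z, hz, hzk⟩
  choose h hmem hval using key
  refine ⟨h, fun i => σ i, ⟨?_, σ.bijective⟩, fun x => (hval x).symm⟩
  intro i x hx
  have := hmem x
  rwa [idx_eq hP hx] at this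

/-- Factorization lemma for `R`: if `ker g ≤ ker f`, then `f = h ∘ g` with `h ∈ B`. -/
lemma factorR (hP : IsPartition P) (f g : X → X) (χf χg : I → I)
    (hf : MemB P f χf) (hg : MemB P g χg)
    (hker : ∀ x y, g x = g y → f x = f y) :
    ∃ h χh, MemB P h χh ∧ ∀ x, f x = h (g x) := by
  classical
  set eg := Equiv.ofBijective χg hg.2 with heg
  refine ⟨fun y => if hy : ∃ x, g x = y then f hy.choose
      else (hP.1 (χf (eg.symm (idx hP y)))).choose,
    fun m => χf (eg.symm m), ⟨?_, ?_⟩, ?_⟩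
  · intro m y hy
    by_cases hex : ∃ x, g x = y
    · simp only [dif_pos hex]
      set x := hex.choose with hx
      have hgx : g x = y := hex.choose_spec
      -- x ∈ P (idx x), g x ∈ P (χg (idx x))
      have h1 : g x ∈ P (χg (idx hP x)) := hg.1 _ (mem_idx hP x)
      have h2 : χg (idx hP x) = m := by
        apply eq_of_mem hP h1
        rwa [hgx]
      have h3 : eg.symm m = idx hP x := by
        rw [← h2]; exact eg.symm_apply_apply _
      rw [h3]
      exact hf.1 _ (mem_idx hP x)
    · simp only [dif_neg hex]
      rw [idx_eq hP hy]
      exact (hP.1 (χf (eg.symm m))).choose_spec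
  · exact (Function.Bijective.comp hf.2 eg.symm.bijective)
  · intro x
    have hex : ∃ x', g x' = g x := ⟨x, rfl⟩
    simp only [dif_pos hex]
    exact (hker _ _ hex.choose_spec).symm

end BXP

lemma BXP.exists_bijOn_of_mk_eq {α : Type*} {s t : Set α}
    (h : Cardinal.mk ↥s = Cardinal.mk ↥t) : ∃ u : α → α, Set.BijOn u s t := by
  classical
  obtain ⟨e⟩ := Cardinal.eq.1 h
  refine ⟨fun y => if hy : y ∈ s then (e ⟨y, hy⟩ : α) else y, ?_, ?_, ?_⟩
  · intro y hy; simp only [dif_pos hy]; exact (e ⟨y, hy⟩).2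
  · intro y hy z hz hyz
    simp only [dif_pos hy, dif_pos hz] at hyz
    exact Subtype.mk_eq_mk.mp (e.injective (Subtype.ext hyz))
  · intro z hz
    refine ⟨(e.symm ⟨z, hz⟩ : α), (e.symm ⟨z, hz⟩).2, ?_⟩
    simp only [dif_pos (e.symm ⟨z, hz⟩).2]
    rw [Subtype.coe_eta, Equiv.apply_symm_apply]

/-- If all the cardinals `|f '' (P i)|` take at most two consecutive values
`λ₁` and `λ₂ = λ₁ + 1` (the successor cardinal), then the `D`-class and the
`J`-class of `f` in `B(X,P)` coincide. -/
theorem D_eq_J_class_of_two_consecutive {X I : Type*} [Nonempty X] (P : I → Set X)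
    (hP : IsPartition P) (f : X → X) (χf : I → I) (hf : MemB P f χf)
    (hlam : ∃ lam1 : Cardinal, ∀ i,
      Cardinal.mk ↥(f '' (P i)) = lam1 ∨ Cardinal.mk ↥(f '' (P i)) = Order.succ lam1) :
    ∀ g χg, MemB P g χg → (GreenJ P f g ↔ GreenD P f g) := by
  classical
  intro g χg hg
  constructor
  · -- J → D : the hard direction
    rintro ⟨⟨h1, χ1, h2, χ2, hh1, hh2, hfact⟩, ⟨h3, χ3, h4, χ4, hh3, hh4, hgact⟩⟩
    obtain ⟨lam1, hμcases⟩ := hlam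
    set μ : I → Cardinal := fun i => Cardinal.mk ↥(f '' P i) with hμdef
    set ν : I → Cardinal := fun j => Cardinal.mk ↥(g '' P j) with hνdef
    have hμc : ∀ i, μ i = lam1 ∨ μ i = Order.succ lam1 := hμcases
    have hμlow : ∀ i, lam1 ≤ μ i := by
      intro i; rcases hμc i with h | h
      · exact h.ge
      · rw [h]; exact Order.le_succ lam1
    have hμup : ∀ i, μ i ≤ Order.succ lam1 := by
      intro i; rcases hμc i with h | h
      · rw [h]; exact Order.le_succ lam1
      · exact h.le
    -- the two cardinal inequalities coming from J
    have hle1 : ∀ i, μ i ≤ ν (χ1 i) := by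
      intro i
      have hsub : f '' P i ⊆ h2 '' (g '' P (χ1 i)) := by
        rintro _ ⟨x, hx, rfl⟩
        exact ⟨g (h1 x), ⟨h1 x, hh1.1 _ hx, rfl⟩, (hfact x).symm⟩
      calc μ i ≤ Cardinal.mk ↥(h2 '' (g '' P (χ1 i))) := Cardinal.mk_le_mk_of_subset hsub
        _ ≤ ν (χ1 i) := Cardinal.mk_image_le
    have hle3 : ∀ j, ν j ≤ μ (χ3 j) := by
      intro j
      have hsub : g '' P j ⊆ h4 '' (f '' P (χ3 j)) := by
        rintro _ ⟨x, hx, rfl⟩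
        exact ⟨f (h3 x), ⟨h3 x, hh3.1 _ hx, rfl⟩, (hgact x).symm⟩
      calc ν j ≤ Cardinal.mk ↥(h4 '' (f '' P (χ3 j))) := Cardinal.mk_le_mk_of_subset hsub
        _ ≤ μ (χ3 j) := Cardinal.mk_image_le
    set e1 : I ≃ I := Equiv.ofBijective χ1 hh1.2 with he1
    set e3 : I ≃ I := Equiv.ofBijective χ3 hh3.2 with he3
    have hχ1e : ∀ j, χ1 (e1.symm j) = j := fun j => e1.apply_symm_apply j
    have hχ3e : ∀ i, χ3 (e3.symm i) = i := fun i => e3.apply_symm_apply i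
    have hνlow : ∀ j, lam1 ≤ ν j := by
      intro j
      calc lam1 ≤ μ (e1.symm j) := hμlow _
        _ ≤ ν (χ1 (e1.symm j)) := hle1 _
        _ = ν j := by rw [hχ1e]
    have hνup : ∀ j, ν j ≤ Order.succ lam1 := fun j => (hle3 j).trans (hμup _)
    have hνc : ∀ j, ν j = lam1 ∨ ν j = Order.succ lam1 := by
      intro j
      rcases eq_or_lt_of_le (hνlow j) with h | h
      · exact Or.inl h.symm
      · exact Or.inr (le_antisymm (hνup j) (Order.succ_le_of_lt h))
    have hlt : (lam1 : Cardinal) ≠ Order.succ lam1 := (Order.lt_succ lam1).ne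
    set Af : I → Prop := fun i => μ i = Order.succ lam1 with hAf
    set Ag : I → Prop := fun j => ν j = Order.succ lam1 with hAg
    -- Schroeder–Bernstein on the "big" indices and on the complements
    have m1 : Cardinal.mk {j // Ag j} = Cardinal.mk {i // Af i} := by
      apply le_antisymm
      · refine Cardinal.mk_le_of_injective (f := fun s => (⟨χ3 s.1, ?_⟩ : {i // Af i})) ?_
        · exact le_antisymm (hμup _) (s.2 ▸ hle3 s.1)
        · intro a b hab
          exact Subtype.ext (hh3.2.1 (congrArg Subtype.val hab))
      · refine Cardinal.mk_le_of_injective (f := fun s => (⟨χ1 s.1, ?_⟩ : {j // Ag j})) ?_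
        · exact le_antisymm (hνup _) (s.2 ▸ hle1 s.1)
        · intro a b hab
          exact Subtype.ext (hh1.2.1 (congrArg Subtype.val hab))
    have m2 : Cardinal.mk {j // ¬ Ag j} = Cardinal.mk {i // ¬ Af i} := by
      apply le_antisymm
      · refine Cardinal.mk_le_of_injective
          (f := fun s => (⟨e1.symm s.1, ?_⟩ : {i // ¬ Af i})) ?_
        · have hνs : ν s.1 = lam1 := (hνc s.1).resolve_right s.2
          have : μ (e1.symm s.1) ≤ lam1 := by
            have := hle1 (e1.symm s.1); rwa [hχ1e, hνs] at this
          have heq : μ (e1.symm s.1) = lam1 := le_antisymm this (hμlow _)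
          rw [hAf]; simp only [heq]; exact hlt
        · intro a b hab
          exact Subtype.ext (e1.symm.injective (congrArg Subtype.val hab))
      · refine Cardinal.mk_le_of_injective
          (f := fun s => (⟨e3.symm s.1, ?_⟩ : {j // ¬ Ag j})) ?_
        · have hμs : μ s.1 = lam1 := (hμc s.1).resolve_right s.2
          have : ν (e3.symm s.1) ≤ lam1 := by
            have := hle3 (e3.symm s.1); rwa [hχ3e, hμs] at this
          have heq : ν (e3.symm s.1) = lam1 := le_antisymm this (hνlow _)
          rw [hAg]; simp only [heq]; exact hlt
        · intro a b hab
          exact Subtype.ext (e3.symm.injective (congrArg Subtype.val hab))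
    obtain ⟨eA⟩ := Cardinal.eq.1 m1
    obtain ⟨eC⟩ := Cardinal.eq.1 m2
    set π : I ≃ I :=
      (Equiv.sumCompl Ag).symm.trans ((Equiv.sumCongr eA eC).trans (Equiv.sumCompl Af))
      with hπ
    have hνμ : ∀ j, ν j = μ (π j) := by
      intro j
      by_cases h : Ag j
      · have h1' : (Equiv.sumCompl Ag).symm j = Sum.inl ⟨j, h⟩ :=
          Equiv.sumCompl_symm_apply_of_pos h
        have h2' : π j = (eA ⟨j, h⟩).1 := by
          rw [hπ]; simp [Equiv.trans_apply, h1']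
        rw [h2']
        have hAfv : μ ((eA ⟨j, h⟩ : {i // Af i}) : I) = Order.succ lam1 := (eA ⟨j, h⟩).2
        have hAgv : ν j = Order.succ lam1 := h
        exact hAgv.trans hAfv.symm
      · have h1' : (Equiv.sumCompl Ag).symm j = Sum.inr ⟨j, h⟩ :=
          Equiv.sumCompl_symm_apply_of_neg h
        have h2' : π j = (eC ⟨j, h⟩).1 := by
          rw [hπ]; simp [Equiv.trans_apply, h1']
        rw [h2']
        have hAfc := (eC ⟨j, h⟩).2
        have hμeq : μ (eC ⟨j, h⟩).1 = lam1 := (hμc _).resolve_right hAfc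
        have hνeq : ν j = lam1 := (hνc j).resolve_right h
        exact hνeq.trans hμeq.symm
    -- build the middle element k
    have hbij : ∀ j, ∃ u : X → X, Set.BijOn u (g '' P j) (f '' P (π j)) :=
      fun j => BXP.exists_bijOn_of_mk_eq (hνμ j)
    choose u hu using hbij
    set k : X → X := fun x => u (BXP.idx hP x) (g x) with hk
    have kmem : ∀ {j : I} {x : X}, x ∈ P j → k x ∈ f '' P (π j) := by
      intro j x hx
      rw [hk]; simp only
      rw [BXP.idx_eq hP hx]
      exact (hu j).mapsTo ⟨x, hx, rfl⟩
    have hmemk : MemB P k (fun j => χf (π j)) := by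
      constructor
      · intro j x hx
        obtain ⟨z, hz, hzk⟩ := kmem hx
        rw [← hzk]; exact hf.1 _ hz
      · exact hf.2.comp π.bijective
    have kim : ∀ j, k '' P j = f '' P (π j) := by
      intro j
      apply Set.Subset.antisymm
      · rintro _ ⟨x, hx, rfl⟩; exact kmem hx
      · intro z hz
        obtain ⟨y, hy, huy⟩ := (hu j).surjOn hz
        obtain ⟨x, hx, rfl⟩ := hy
        refine ⟨x, hx, ?_⟩
        rw [hk]; simp only
        rw [BXP.idx_eq hP hx]; exact huy
    have kker : ∀ x y : X, k x = k y ↔ g x = g y := by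
      intro x y
      constructor
      · intro hxy
        have hx : k x ∈ f '' P (π (BXP.idx hP x)) := kmem (BXP.mem_idx hP x)
        have hy : k y ∈ f '' P (π (BXP.idx hP y)) := kmem (BXP.mem_idx hP y)
        have hx' : k x ∈ P (χf (π (BXP.idx hP x))) := by
          obtain ⟨z, hz, hzk⟩ := hx; rw [← hzk]; exact hf.1 _ hz
        have hy' : k y ∈ P (χf (π (BXP.idx hP y))) := by
          obtain ⟨z, hz, hzk⟩ := hy; rw [← hzk]; exact hf.1 _ hz
        rw [hxy] at hx'
        have hii : BXP.idx hP x = BXP.idx hP y :=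
          π.injective (hf.2.1 (BXP.eq_of_mem hP hx' hy'))
        have hgx : g x ∈ g '' P (BXP.idx hP x) := ⟨x, BXP.mem_idx hP x, rfl⟩
        have hgy : g y ∈ g '' P (BXP.idx hP x) := by
          rw [hii]; exact ⟨y, BXP.mem_idx hP y, rfl⟩
        apply (hu (BXP.idx hP x)).injOn hgx hgy
        rw [hk] at hxy; simp only at hxy
        rwa [← hii] at hxy
      · intro hxy
        have h1' : g x ∈ P (χg (BXP.idx hP x)) := hg.1 _ (BXP.mem_idx hP x)
        have h2' : g y ∈ P (χg (BXP.idx hP y)) := hg.1 _ (BXP.mem_idx hP y)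
        rw [hxy] at h1'
        have hii : BXP.idx hP x = BXP.idx hP y := hg.2.1 (BXP.eq_of_mem hP h1' h2')
        rw [hk]; simp only
        rw [hii, hxy]
    -- assemble the D relation
    refine ⟨k, fun j => χf (π j), hmemk, ?_, ?_⟩
    · -- f L k
      obtain ⟨h, χh, hh, hfk⟩ := BXP.factorL hP f k π.symm
        (fun i => by rw [kim (π.symm i), Equiv.apply_symm_apply])
      obtain ⟨h', χh', hh', hkf⟩ := BXP.factorL hP k f π (fun j => kim j)
      exact ⟨h, χh, h', χh', hh, hh', hfk, hkf⟩
    · -- k R g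
      obtain ⟨h, χh, hh, hkg⟩ := BXP.factorR hP k g (fun j => χf (π j)) χg hmemk hg
        (fun x y hxy => (kker x y).2 hxy)
      obtain ⟨h', χh', hh', hgk⟩ := BXP.factorR hP g k χg (fun j => χf (π j)) hg hmemk
        (fun x y hxy => (kker x y).1 hxy)
      exact ⟨h, χh, h', χh', hh, hh', hkg, hgk⟩
  · -- D → J : the easy direction
    rintro ⟨k, χk, hk, ⟨h, χh, h', χh', hh, hh', hfk, hkf⟩,
      ⟨h2, χ2, h2', χ2', hh2, hh2', hkg, hgk⟩⟩
    constructor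
    · exact ⟨h, χh, h2, χ2, hh, hh2, fun x => by rw [hfk x, hkg (h x)]⟩
    · exact ⟨h', χh', h2', χ2', hh', hh2', fun x => by rw [hgk x, hkf x]⟩
end

section
/- Let f be in B(X,P). If |f(X_i)| <= 2 for every i in I, then the D-class and the J-class of f in B(X,P) coincide: for every g in B(X,P), f J g if and only if f D g. -/
open Cardinal

namespace DJaux

variable {X I : Type*}

/-- A set has at most two elements (among any three, two coincide). -/
def AtMostTwo (S : Set X) : Prop := ∀ a ∈ S, ∀ b ∈ S, ∀ c ∈ S, a = b ∨ a = c ∨ b = c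

theorem atMostTwo_of_mk_le_two {S : Set X} (h : Cardinal.mk ↥S ≤ 2) : AtMostTwo S := by
  intro a ha b hb c hc
  by_contra hcon
  push_neg at hcon
  obtain ⟨hab, hac, hbc⟩ := hcon
  have hsub : ({a, b, c} : Set X) ⊆ S := by
    intro z hz
    rcases hz with rfl | rfl | rfl <;> assumption
  have h3 : Cardinal.mk ↥({a, b, c} : Set X) = 3 := by
    rw [Cardinal.mk_insert (by simp [hab, hac]), Cardinal.mk_insert (by simp [hbc]),
      Cardinal.mk_singleton]
    norm_num
  have := (h3 ▸ Cardinal.mk_le_mk_of_subset hsub).trans h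
  norm_num at this

theorem AtMostTwo.image {S : Set X} (h : AtMostTwo S) (u : X → X) : AtMostTwo (u '' S) := by
  rintro _ ⟨a, ha, rfl⟩ _ ⟨b, hb, rfl⟩ _ ⟨c, hc, rfl⟩
  rcases h a ha b hb c hc with h' | h' | h'
  · exact Or.inl (by rw [h'])
  · exact Or.inr (Or.inl (by rw [h']))
  · exact Or.inr (Or.inr (by rw [h']))

theorem AtMostTwo.anti {S T : Set X} (h : AtMostTwo T) (hsub : S ⊆ T) : AtMostTwo S :=
  fun a ha b hb c hc => h a (hsub ha) b (hsub hb) c (hsub hc)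

variable (P : I → Set X)

/-- The index of the block containing `x`. -/
noncomputable def idx (hP : IsPartition P) (x : X) : I := (hP.2.2 x).choose

theorem mem_idx (hP : IsPartition P) (x : X) : x ∈ P (idx P hP x) := (hP.2.2 x).choose_spec

theorem block_eq (hP : IsPartition P) {x : X} {i j : I} (hi : x ∈ P i) (hj : x ∈ P j) :
    i = j := by
  by_contra h
  exact Set.disjoint_left.mp (hP.2.1 h) hi hj

theorem idx_unique (hP : IsPartition P) {x : X} {i : I} (hx : x ∈ P i) : idx P hP x = i :=
  block_eq P hP (mem_idx P hP x) hx

/-- One-sided `L`-type factorization from blockwise image inclusion. -/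
theorem factorL (hP : IsPartition P) (f k : X → X) (σ : I → I) (hσ : Function.Bijective σ)
    (hsub : ∀ i, f '' P i ⊆ k '' P (σ i)) :
    ∃ h, MemB P h σ ∧ ∀ x, f x = k (h x) := by
  have hx : ∀ x : X, f x ∈ k '' P (σ (idx P hP x)) :=
    fun x => hsub _ ⟨x, mem_idx P hP x, rfl⟩
  refine ⟨fun x => (hx x).choose, ⟨?_, hσ⟩, fun x => ((hx x).choose_spec.2).symm⟩
  intro i x hxi
  have h1 : idx P hP x = i := idx_unique P hP hxi
  show (hx x).choose ∈ P (σ i)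
  rw [← h1]
  exact (hx x).choose_spec.1

/-- One-sided `R`-type factorization from kernel inclusion. -/
theorem factorR (hP : IsPartition P) (k g : X → X) (χk χg : I → I) (hk : MemB P k χk)
    (hg : MemB P g χg) (hker : ∀ x y, g x = g y → k x = k y) :
    ∃ h χh, MemB P h χh ∧ ∀ x, k x = h (g x) := by
  classical
  let e : I ≃ I := Equiv.ofBijective χg hg.2
  refine ⟨fun y => if hy : ∃ x, g x = y then k hy.choose
      else (hP.1 (χk (e.symm (idx P hP y)))).choose,
    fun j => χk (e.symm j), ⟨?_, (hk.2.comp (e.symm.bijective))⟩, ?_⟩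
  · intro j y hyj
    by_cases hy : ∃ x, g x = y
    · simp only [dif_pos hy]
      have hgx₀ : g hy.choose = y := hy.choose_spec
      have hx₀mem : hy.choose ∈ P (idx P hP hy.choose) := mem_idx P hP hy.choose
      have hymem : y ∈ P (χg (idx P hP hy.choose)) := by
        have := hg.1 _ hx₀mem
        rwa [hgx₀] at this
      have hj : χg (idx P hP hy.choose) = j := block_eq P hP hymem hyj
      have hsymm : e.symm j = idx P hP hy.choose := by
        rw [Equiv.symm_apply_eq]
        exact hj.symm
      show k hy.choose ∈ P (χk (e.symm j))
      rw [hsymm]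
      exact hk.1 _ hx₀mem
    · simp only [dif_neg hy]
      rw [idx_unique P hP hyj]
      exact (hP.1 (χk (e.symm j))).choose_spec
  · intro x
    have hy : ∃ x', g x' = g x := ⟨x, rfl⟩
    simp only [dif_pos hy]
    exact (hker _ _ hy.choose_spec).symm

end DJaux

open DJaux

/-- If `|f '' (P i)| ≤ 2` for all `i`, then the `D`-class and the `J`-class of `f`
in `B(X,P)` coincide. -/
theorem D_eq_J_class_of_le_two {X I : Type*} [Nonempty X] (P : I → Set X)
    (hP : IsPartition P) (f : X → X) (χf : I → I) (hf : MemB P f χf)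
    (hle : ∀ i, Cardinal.mk ↥(f '' (P i)) ≤ 2) :
    ∀ g χg, MemB P g χg → (GreenJ P f g ↔ GreenD P f g) := by
  intro g χg hg
  constructor
  · -- J → D
    rintro ⟨⟨h1, χ1, h2, χ2, hh1, hh2, heq1⟩, h3, χ3, h4, χ4, hh3, hh4, heq2⟩
    classical
    have hsub1 : ∀ i, f '' P i ⊆ h2 '' (g '' P (χ1 i)) := by
      rintro i _ ⟨x, hx, rfl⟩
      exact ⟨g (h1 x), ⟨h1 x, hh1.1 _ hx, rfl⟩, (heq1 x).symm⟩
    have hsub2 : ∀ j, g '' P j ⊆ h4 '' (f '' P (χ3 j)) := by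
      rintro j _ ⟨x, hx, rfl⟩
      exact ⟨f (h3 x), ⟨h3 x, hh3.1 _ hx, rfl⟩, (heq2 x).symm⟩
    have hfa : ∀ i, AtMostTwo (f '' P i) := fun i => atMostTwo_of_mk_le_two (hle i)
    have hga : ∀ j, AtMostTwo (g '' P j) :=
      fun j => ((hfa (χ3 j)).image h4).anti (hsub2 j)
    have imp1 : ∀ i, (g '' P (χ1 i)).Subsingleton → (f '' P i).Subsingleton :=
      fun i hs => (hs.image h2).anti (hsub1 i)
    have imp2 : ∀ j, (f '' P (χ3 j)).Subsingleton → (g '' P j).Subsingleton :=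
      fun j hs => (hs.image h4).anti (hsub2 j)
    set Sf : I → Prop := fun i => (f '' P i).Subsingleton with hSfdef
    set Sg : I → Prop := fun j => (g '' P j).Subsingleton with hSgdef
    let e1 : I ≃ I := Equiv.ofBijective χ1 hh1.2
    let e3 : I ≃ I := Equiv.ofBijective χ3 hh3.2
    have embN1 : {i // ¬ Sf i} ↪ {j // ¬ Sg j} :=
      ⟨fun p => ⟨χ1 p.1, fun hs => p.2 (imp1 p.1 hs)⟩,
       fun p q hpq => Subtype.ext (hh1.2.1 (congrArg Subtype.val hpq))⟩
    have embN2 : {j // ¬ Sg j} ↪ {i // ¬ Sf i} :=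
      ⟨fun p => ⟨χ3 p.1, fun hs => p.2 (imp2 p.1 hs)⟩,
       fun p q hpq => Subtype.ext (hh3.2.1 (congrArg Subtype.val hpq))⟩
    have embS1 : {i // Sf i} ↪ {j // Sg j} :=
      ⟨fun p => ⟨e3.symm p.1, imp2 _
        (by rw [show χ3 (e3.symm p.1) = p.1 from e3.apply_symm_apply p.1]; exact p.2)⟩,
       fun p q hpq => Subtype.ext (e3.symm.injective (congrArg Subtype.val hpq))⟩
    have embS2 : {j // Sg j} ↪ {i // Sf i} :=
      ⟨fun p => ⟨e1.symm p.1, imp1 _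
        (by rw [show χ1 (e1.symm p.1) = p.1 from e1.apply_symm_apply p.1]; exact p.2)⟩,
       fun p q hpq => Subtype.ext (e1.symm.injective (congrArg Subtype.val hpq))⟩
    obtain ⟨eN⟩ := embN1.antisymm embN2
    obtain ⟨eS⟩ := embS1.antisymm embS2
    let σ : Equiv.Perm I := Equiv.subtypeCongr eS eN
    have hσ : ∀ i, σ i = if h : Sf i then (eS ⟨i, h⟩ : I) else (eN ⟨i, h⟩ : I) := by
      intro i
      by_cases h : Sf i
      · simp only [σ, Equiv.subtypeCongr, Equiv.trans_apply,
          Equiv.sumCompl_symm_apply_of_pos h, Equiv.sumCongr_apply, Sum.map_inl,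
          Equiv.sumCompl_apply_inl, dif_pos h]
      · simp only [σ, Equiv.subtypeCongr, Equiv.trans_apply,
          Equiv.sumCompl_symm_apply_of_neg h, Equiv.sumCongr_apply, Sum.map_inr,
          Equiv.sumCompl_apply_inr, dif_neg h]
    have hprop : ∀ i, Sg (σ i) ↔ Sf i := by
      intro i
      by_cases h : Sf i
      · rw [hσ i, dif_pos h]
        exact ⟨fun _ => h, fun _ => (eS ⟨i, h⟩).2⟩
      · rw [hσ i, dif_neg h]
        exact ⟨fun hs => absurd hs (eN ⟨i, h⟩).2, fun hs => absurd hs h⟩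
    -- construct k
    let ρ : I → I := σ.symm
    let pt : I → X := fun i => (hP.1 i).choose
    have pt_mem : ∀ i, pt i ∈ P i := fun i => (hP.1 i).choose_spec
    let c : I → X := fun i => f (pt i)
    have c_mem : ∀ i, c i ∈ f '' P i := fun i => ⟨pt i, pt_mem i, rfl⟩
    let a : I → X := fun i => g (pt (σ i))
    have a_mem : ∀ i, a i ∈ g '' P (σ i) := fun i => ⟨pt (σ i), pt_mem _, rfl⟩
    let d : I → X := fun i => if h : ∃ z ∈ f '' P i, z ≠ c i then h.choose else c i
    have d_mem : ∀ i, d i ∈ f '' P i := by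
      intro i
      by_cases h : ∃ z ∈ f '' P i, z ≠ c i
      · simp only [d, dif_pos h]
        exact h.choose_spec.1
      · simp only [d, dif_neg h]
        exact c_mem i
    have d_ne : ∀ i, ¬ Sf i → d i ≠ c i := by
      intro i hi
      have h : ∃ z ∈ f '' P i, z ≠ c i := by
        obtain ⟨u, hu, v, hv, huv⟩ := Set.not_subsingleton_iff.mp hi
        by_cases hu' : u = c i
        · exact ⟨v, hv, fun hv' => huv (by rw [hu', hv'])⟩
        · exact ⟨u, hu, hu'⟩
      simp only [d, dif_pos h]
      exact h.choose_spec.2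
    let k : X → X := fun x =>
      if g x = a (ρ (idx P hP x)) then c (ρ (idx P hP x)) else d (ρ (idx P hP x))
    have k_eq : ∀ {j} (x : X), x ∈ P j →
        k x = if g x = a (ρ j) then c (ρ j) else d (ρ j) := by
      intro j x hx
      simp only [k, idx_unique P hP hx]
    have k_mem : ∀ {j} (x : X), x ∈ P j → k x ∈ f '' P (ρ j) := by
      intro j x hx
      rw [k_eq x hx]
      by_cases h : g x = a (ρ j)
      · rw [if_pos h]; exact c_mem _
      · rw [if_neg h]; exact d_mem _
    have hχk : MemB P k (fun j => χf (ρ j)) := by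
      refine ⟨fun j x hx => ?_, hf.2.comp σ.symm.bijective⟩
      obtain ⟨w, hw, hwk⟩ := k_mem x hx
      exact hwk ▸ hf.1 _ hw
    have him : ∀ i, k '' P (σ i) = f '' P i := by
      intro i
      have hρσ : ρ (σ i) = i := σ.symm_apply_apply i
      have hc_att : c i ∈ k '' P (σ i) := by
        refine ⟨pt (σ i), pt_mem _, ?_⟩
        rw [k_eq (pt (σ i)) (pt_mem (σ i)), hρσ, if_pos rfl]
      apply Set.Subset.antisymm
      · rintro _ ⟨x, hx, rfl⟩
        rw [k_eq x hx, hρσ]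
        by_cases h : g x = a i
        · rw [if_pos h]; exact c_mem i
        · rw [if_neg h]; exact d_mem i
      · intro z hz
        by_cases hss : Sf i
        · rwa [hss hz (c_mem i)]
        · have hgd : ¬ Sg (σ i) := fun hs => hss ((hprop i).mp hs)
          obtain ⟨u, hu, v, hv, huv⟩ := Set.not_subsingleton_iff.mp hgd
          have hex : ∃ w ∈ g '' P (σ i), w ≠ a i := by
            by_cases hu' : u = a i
            · exact ⟨v, hv, fun h => huv (by rw [hu', h])⟩
            · exact ⟨u, hu, hu'⟩
          obtain ⟨w, ⟨xb, hxb, hw⟩, hwa⟩ := hex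
          have hd_att : d i ∈ k '' P (σ i) := by
            refine ⟨xb, hxb, ?_⟩
            rw [k_eq xb hxb, hρσ, if_neg (by rw [hw]; exact hwa)]
          rcases hfa i (c i) (c_mem i) (d i) (d_mem i) z hz with h' | h' | h'
          · exact absurd h' (fun h'' => d_ne i hss h''.symm)
          · rw [← h']; exact hc_att
          · rw [← h']; exact hd_att
    have gblock : ∀ x : X, g x ∈ P (χg (idx P hP x)) := fun x => hg.1 _ (mem_idx P hP x)
    have hker : ∀ x y, k x = k y ↔ g x = g y := by
      intro x y
      constructor
      · intro hkxy
        have hkx : k x ∈ P (χf (ρ (idx P hP x))) := by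
          obtain ⟨w, hw, hwk⟩ := k_mem x (mem_idx P hP x)
          exact hwk ▸ hf.1 _ hw
        have hky : k y ∈ P (χf (ρ (idx P hP y))) := by
          obtain ⟨w, hw, hwk⟩ := k_mem y (mem_idx P hP y)
          exact hwk ▸ hf.1 _ hw
        have hjj : idx P hP x = idx P hP y :=
          σ.symm.injective (hf.2.1 (block_eq P hP hkx (hkxy ▸ hky)))
        have ex : k x = if g x = a (ρ (idx P hP x)) then c (ρ (idx P hP x))
            else d (ρ (idx P hP x)) := k_eq x (mem_idx P hP x)
        have ey : k y = if g y = a (ρ (idx P hP y)) then c (ρ (idx P hP y))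
            else d (ρ (idx P hP y)) := k_eq y (mem_idx P hP y)
        rw [← hjj] at ey
        set i := ρ (idx P hP x) with hidef
        have hσi : σ i = idx P hP x := σ.apply_symm_apply _
        have hgx : g x ∈ g '' P (σ i) := by
          rw [hσi]; exact ⟨x, mem_idx P hP x, rfl⟩
        have hgy : g y ∈ g '' P (σ i) := by
          rw [hσi, hjj]; exact ⟨y, mem_idx P hP y, rfl⟩
        by_cases hx' : g x = a i <;> by_cases hy' : g y = a i
        · rw [hx', hy']
        · exfalso
          have hnt : ¬ Sg (σ i) := fun hs => hy' (hs hgy (a_mem i))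
          rw [ex, if_pos hx'] at hkxy
          rw [ey, if_neg hy'] at hkxy
          exact d_ne i (fun hsf => hnt ((hprop i).mpr hsf)) hkxy.symm
        · exfalso
          have hnt : ¬ Sg (σ i) := fun hs => hx' (hs hgx (a_mem i))
          rw [ex, if_neg hx'] at hkxy
          rw [ey, if_pos hy'] at hkxy
          exact d_ne i (fun hsf => hnt ((hprop i).mpr hsf)) hkxy
        · rcases hga (σ i) (a i) (a_mem i) (g x) hgx (g y) hgy with h' | h' | h'
          · exact absurd h'.symm hx'
          · exact absurd h'.symm hy'
          · exact h'
      · intro hgxy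
        have hjj : idx P hP x = idx P hP y :=
          hg.2.1 (block_eq P hP (gblock x) (hgxy ▸ gblock y))
        rw [k_eq x (mem_idx P hP x)]
        have ey := k_eq y (mem_idx P hP y)
        rw [← hjj] at ey
        rw [ey, hgxy]
    refine ⟨k, fun j => χf (ρ j), hχk, ?_, ?_⟩
    · -- GreenL P f k
      obtain ⟨h, hh, heq⟩ :=
        factorL P hP f k σ σ.bijective (fun i => (him i).symm.subset)
      have hsub' : ∀ j, k '' P j ⊆ f '' P (ρ j) := by
        intro j
        have h' := him (ρ j)
        rw [σ.apply_symm_apply] at h'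
        exact h'.subset
      obtain ⟨h', hh', heq'⟩ := factorL P hP k f ρ σ.symm.bijective hsub'
      exact ⟨h, σ, h', ρ, hh, hh', heq, heq'⟩
    · -- GreenR P k g
      obtain ⟨m, χm, hm, meq⟩ :=
        factorR P hP k g _ χg hχk hg (fun x y h => (hker x y).2 h)
      obtain ⟨m', χm', hm', meq'⟩ :=
        factorR P hP g k χg _ hg hχk (fun x y h => (hker x y).1 h)
      exact ⟨m, χm, m', χm', hm, hm', meq, meq'⟩
  · -- D → J
    rintro ⟨k, χk, hk, ⟨h, χh, h', χh', hh, hh', heq, heq'⟩,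
      ⟨m, χm, m', χm', hm, hm', meq, meq'⟩⟩
    exact ⟨⟨h, χh, m, χm, hh, hm, fun x => (heq x).trans (meq (h x))⟩,
      ⟨h', χh', m', χm', hh', hm', fun x => (meq' x).trans (congrArg m' (heq' x))⟩⟩
end

section
/- Green's relations D and J coincide on B(X,P) (for all f, g in B(X,P), f D g if and only if f J g) if and only if the set {i in I : |X_i| >= 3} is finite. -/
open Cardinal

namespace DJ

variable {X I : Type*} {P : I → Set X}

lemma block_eq (hP : IsPartition P) {x : X} {i j : I} (hi : x ∈ P i) (hj : x ∈ P j) : i = j := by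
  by_contra h
  exact Set.disjoint_left.mp (hP.2.1 h) hi hj

noncomputable def idx (hP : IsPartition P) (x : X) : I := (hP.2.2 x).choose

lemma idx_mem (hP : IsPartition P) (x : X) : x ∈ P (idx hP x) := (hP.2.2 x).choose_spec

lemma idx_eq (hP : IsPartition P) {x : X} {i : I} (h : x ∈ P i) : idx hP x = i :=
  block_eq hP (idx_mem hP x) h

noncomputable def dflt (hP : IsPartition P) (i : I) : X := (hP.1 i).choose

lemma dflt_mem (hP : IsPartition P) (i : I) : dflt hP i ∈ P i := (hP.1 i).choose_spec

lemma rank_le (f : X → X) (i : I) : #(f '' P i) ≤ #(P i) := Cardinal.mk_image_le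

lemma rank_one_le (hP : IsPartition P) (f : X → X) (i : I) : 1 ≤ #(f '' P i) := by
  rw [Cardinal.one_le_iff_ne_zero, Cardinal.mk_ne_zero_iff]
  exact ((hP.1 i).image f).to_subtype

lemma j_rank {f g h1 h2 : X → X} {χ1 : I → I} (hh1 : MemB P h1 χ1)
    (e : ∀ x, f x = h2 (g (h1 x))) (i : I) :
    #(f '' P i) ≤ #(g '' P (χ1 i)) := by
  have himg : f '' P i ⊆ h2 '' (g '' P (χ1 i)) := by
    rintro y ⟨x, hx, rfl⟩
    exact ⟨g (h1 x), Set.mem_image_of_mem g ((hh1.1 i) hx), (e x).symm⟩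
  exact (Cardinal.mk_le_mk_of_subset himg).trans Cardinal.mk_image_le

lemma d_to_j {f g : X → X} (hD : GreenD P f g) : GreenJ P f g := by
  obtain ⟨k, χk, hk, ⟨h, χh, h', χh', hh, hh', e1, e2⟩, ⟨a, χa, a', χa', ha, ha', e3, e4⟩⟩ := hD
  exact ⟨⟨h, χh, a, χa, hh, ha, fun x => by rw [e1 x, e3 (h x)]⟩,
        ⟨h', χh', a', χa', hh', ha', fun x => by rw [e4 x, e2 x]⟩⟩

lemma d_rank (hP : IsPartition P) {f g : X → X} {χf χg : I → I}
    (hf : MemB P f χf) (hg : MemB P g χg) (hD : GreenD P f g) :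
    ∃ β : I → I, Function.Bijective β ∧ ∀ i, #(f '' P i) = #(g '' P (β i)) := by
  obtain ⟨k, χk, hk, ⟨h, χh, h', χh', hh, hh', e1, e2⟩, ⟨a, χa, a', χa', ha, ha', e3, e4⟩⟩ := hD
  have hsub1 : ∀ i, f '' P i ⊆ k '' P (χh i) := by
    rintro i y ⟨x, hx, rfl⟩; exact ⟨h x, hh.1 i hx, (e1 x).symm⟩
  have hsub2 : ∀ j, k '' P j ⊆ f '' P (χh' j) := by
    rintro j y ⟨x, hx, rfl⟩; exact ⟨h' x, hh'.1 j hx, (e2 x).symm⟩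
  have hforce1 : ∀ i, χk (χh i) = χf i := by
    intro i
    obtain ⟨x, hx⟩ := hP.1 i
    exact block_eq hP (by rw [e1 x]; exact hk.1 _ (hh.1 i hx)) (hf.1 i hx)
  have hforce2 : ∀ j, χf (χh' j) = χk j := by
    intro j
    obtain ⟨x, hx⟩ := hP.1 j
    exact block_eq hP (by rw [e2 x]; exact hf.1 _ (hh'.1 j hx)) (hk.1 j hx)
  have hinv : ∀ i, χh' (χh i) = i := by
    intro i
    apply hf.2.injective
    rw [hforce2, hforce1]
  have hEq : ∀ i, f '' P i = k '' P (χh i) := by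
    intro i
    refine Set.Subset.antisymm (hsub1 i) ?_
    have h2 := hsub2 (χh i)
    rwa [hinv i] at h2
  have hkg : ∀ j, #(k '' P j) = #(g '' P j) := by
    intro j
    apply le_antisymm
    · refine (Cardinal.mk_le_mk_of_subset ?_).trans (Cardinal.mk_image_le (f := a) (s := g '' P j))
      rintro y ⟨x, hx, rfl⟩; exact ⟨g x, Set.mem_image_of_mem g hx, (e3 x).symm⟩
    · refine (Cardinal.mk_le_mk_of_subset ?_).trans (Cardinal.mk_image_le (f := a') (s := k '' P j))
      rintro y ⟨x, hx, rfl⟩; exact ⟨k x, Set.mem_image_of_mem k hx, (e4 x).symm⟩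
  exact ⟨χh, hh.2, fun i => by rw [hEq i, hkg (χh i)]⟩

end DJ
namespace DJ

lemma iter_eq {α : Type*} [Finite α] (θ : α → α) (hθ : Function.Injective θ)
    (v : α → Cardinal) (hmono : ∀ a, v a ≤ v (θ a)) (a : α) : v (θ a) = v a := by
  have chain : ∀ (n : ℕ) (b : α), v b ≤ v (θ^[n] b) := by
    intro n
    induction n with
    | zero => simp
    | succ n ih =>
      intro b
      rw [Function.iterate_succ_apply]
      exact (hmono b).trans (ih (θ b))
  obtain ⟨m, n, hmn, hiter⟩ := Finite.exists_ne_map_eq_of_infinite (fun n : ℕ => θ^[n] a)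
  wlog hlt : m < n generalizing m n
  · exact this n m (Ne.symm hmn) hiter.symm (by omega)
  have hfix : θ^[n - m] a = a := by
    apply Function.Injective.iterate hθ m
    rw [← Function.iterate_add_apply, show m + (n - m) = n from by omega]
    exact hiter.symm
  have hle : v (θ a) ≤ v a := by
    have h2 := chain (n - m - 1) (θ a)
    rw [← Function.iterate_succ_apply] at h2
    have h4 : (n - m - 1).succ = n - m := by omega
    rw [h4, hfix] at h2
    exact h2
  exact le_antisymm hle (hmono a)

lemma card_small {c : Cardinal} (h : c < 3) : ∃ m : ℕ, m < 3 ∧ c = m := by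
  have h3 : (3 : Cardinal) < Cardinal.aleph0 := by exact_mod_cast Cardinal.nat_lt_aleph0 3
  obtain ⟨m, rfl⟩ := Cardinal.lt_aleph0.mp (h.trans h3)
  exact ⟨m, by exact_mod_cast h, rfl⟩

lemma not_card32 : ¬ (3:Cardinal) ≤ 2 := by
  intro h
  have h' : (3:ℕ) ≤ 2 := by exact_mod_cast h
  omega

lemma not_card31 : ¬ (3:Cardinal) ≤ 1 := by
  intro h
  have h' : (3:ℕ) ≤ 1 := by exact_mod_cast h
  omega

lemma card_ne12 : (1:Cardinal) ≠ 2 := by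
  intro h
  have h' : (1:ℕ) = 2 := by exact_mod_cast h
  omega

universe u_c

lemma card_two_le_three : (2:Cardinal.{u_c}) ≤ 3 := by
  have h : ((2:ℕ):Cardinal.{u_c}) ≤ ((3:ℕ):Cardinal.{u_c}) := Nat.cast_le.mpr (by omega : (2:ℕ) ≤ 3)
  exact_mod_cast h

lemma comb {I : Type*} (r s : I → Cardinal)
    (hr1 : ∀ i, 1 ≤ r i) (hs1 : ∀ i, 1 ≤ s i)
    (hA : {i | 3 ≤ r i}.Finite) (hB : {i | 3 ≤ s i}.Finite)
    (π π' : Equiv.Perm I)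
    (hd1 : ∀ i, r i ≤ s (π i)) (hd2 : ∀ i, s i ≤ r (π' i)) :
    ∃ τ : I ≃ I, ∀ i, r i = s (τ i) := by
  classical
  have hAB : ∀ i, 3 ≤ r i → 3 ≤ s (π i) := fun i hi => le_trans hi (hd1 i)
  have hBA : ∀ j, 3 ≤ s j → 3 ≤ r (π' j) := fun j hj => le_trans hj (hd2 j)
  haveI fA : Fintype {i | 3 ≤ r i} := hA.fintype
  haveI fB : Fintype {i | 3 ≤ s i} := hB.fintype
  set A := {i | 3 ≤ r i} with hAdef
  set B := {i | 3 ≤ s i} with hBdef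
  have hmemA : ∀ i : I, i ∈ A ↔ 3 ≤ r i := fun i => Iff.rfl
  have hmemB : ∀ j : I, j ∈ B ↔ 3 ≤ s j := fun j => Iff.rfl
  set πA : A → B := fun a => ⟨π a, hAB a a.2⟩ with hπAdef
  set πB : B → A := fun b => ⟨π' b, hBA b b.2⟩ with hπBdef
  have hπAinj : Function.Injective πA := fun a b h =>
    Subtype.ext (π.injective (congrArg Subtype.val h))
  have hπBinj : Function.Injective πB := fun a b h =>
    Subtype.ext (π'.injective (congrArg Subtype.val h))
  have hcard : Fintype.card A = Fintype.card B :=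
    le_antisymm (Fintype.card_le_of_injective πA hπAinj) (Fintype.card_le_of_injective πB hπBinj)
  have hπAbij : Function.Bijective πA :=
    (Fintype.bijective_iff_injective_and_card πA).mpr ⟨hπAinj, hcard⟩
  have hπBbij : Function.Bijective πB :=
    (Fintype.bijective_iff_injective_and_card πB).mpr ⟨hπBinj, hcard.symm⟩
  have hAmem : ∀ i, 3 ≤ s (π i) → 3 ≤ r i := by
    intro i hi
    obtain ⟨a, ha⟩ := hπAbij.2 ⟨π i, hi⟩
    have h1 : π (a : I) = π i := congrArg Subtype.val ha
    have h2 := π.injective h1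
    rw [← h2]; exact a.2
  have hBmem : ∀ j, 3 ≤ r (π' j) → 3 ≤ s j := by
    intro j hj
    obtain ⟨b, hb⟩ := hπBbij.2 ⟨π' j, hj⟩
    have h1 : π' (b : I) = π' j := congrArg Subtype.val hb
    have h2 := π'.injective h1
    rw [← h2]; exact b.2
  have keyA : ∀ i, 3 ≤ r i → s (π i) = r i := by
    intro i hi
    haveI : Finite A := hA.to_subtype
    have hθinj : Function.Injective (fun a : A => (⟨π' (π a), hBA _ (hAB a a.2)⟩ : A)) :=
      fun a b h => Subtype.ext (π.injective (π'.injective (congrArg Subtype.val h)))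
    have hiter := iter_eq (fun a : A => (⟨π' (π a), hBA _ (hAB a a.2)⟩ : A)) hθinj
      (fun a => r a) (fun a => (hd1 a).trans (hd2 (π a))) ⟨i, hi⟩
    refine le_antisymm ?_ (hd1 i)
    calc s (π i) ≤ r (π' (π i)) := hd2 (π i)
      _ = r i := hiter
  have keyA' : ∀ j, 3 ≤ s j → 3 ≤ r (π.symm j) := by
    intro j hj
    obtain ⟨a, ha⟩ := hπAbij.2 ⟨j, hj⟩
    have h1 : π (a : I) = j := congrArg Subtype.val ha
    rw [← h1, Equiv.symm_apply_apply]; exact a.2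
  have not32 : ¬ (3 : Cardinal) ≤ 2 := not_card32
  have r_eq : ∀ i, ¬ 3 ≤ r i → r i = 1 ∨ r i = 2 := by
    intro i h
    obtain ⟨m, hm, hcm⟩ := card_small (not_le.mp h)
    have h1 : 1 ≤ m := by
      have := hr1 i; rw [hcm] at this; exact_mod_cast this
    interval_cases m
    · exact Or.inl (by rw [hcm]; norm_num)
    · exact Or.inr (by rw [hcm]; norm_num)
  have s_eq : ∀ j, ¬ 3 ≤ s j → s j = 1 ∨ s j = 2 := by
    intro j h
    obtain ⟨m, hm, hcm⟩ := card_small (not_le.mp h)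
    have h1 : 1 ≤ m := by
      have := hs1 j; rw [hcm] at this; exact_mod_cast this
    interval_cases m
    · exact Or.inl (by rw [hcm]; norm_num)
    · exact Or.inr (by rw [hcm]; norm_num)
  have two_to_two : ∀ i, r i = 2 → s (π i) = 2 := by
    intro i hi
    have h2 : (2 : Cardinal) ≤ s (π i) := by rw [← hi]; exact hd1 i
    have hnB : ¬ 3 ≤ s (π i) := fun h => not32 (by rw [← hi]; exact hAmem i h)
    rcases s_eq (π i) hnB with h | h
    · exfalso; rw [h] at h2
      have : (2:ℕ) ≤ 1 := by exact_mod_cast h2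
      omega
    · exact h
  have two_to_two' : ∀ j, s j = 2 → r (π' j) = 2 := by
    intro j hj
    have h2 : (2 : Cardinal) ≤ r (π' j) := by rw [← hj]; exact hd2 j
    have hnA : ¬ 3 ≤ r (π' j) := fun h => not32 (by rw [← hj]; exact hBmem j h)
    rcases r_eq (π' j) hnA with h | h
    · exfalso; rw [h] at h2
      have : (2:ℕ) ≤ 1 := by exact_mod_cast h2
      omega
    · exact h
  have one_from_one : ∀ j, s j = 1 → r (π.symm j) = 1 := by
    intro j hj
    have hle : r (π.symm j) ≤ 1 := by
      have := hd1 (π.symm j); rwa [Equiv.apply_symm_apply, hj] at this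
    exact le_antisymm hle (hr1 _)
  have one_from_one' : ∀ i, r i = 1 → s (π'.symm i) = 1 := by
    intro i hi
    have hle : s (π'.symm i) ≤ 1 := by
      have := hd2 (π'.symm i); rwa [Equiv.apply_symm_apply, hi] at this
    exact le_antisymm hle (hs1 _)
  -- level 2 equivalence
  have hmk2 : #{i // r i = 2} = #{j // s j = 2} := by
    apply le_antisymm
    · exact Cardinal.mk_le_of_injective (f := fun x : {i // r i = 2} =>
        (⟨π x, two_to_two _ x.2⟩ : {j // s j = 2}))
        (fun a b h => Subtype.ext (π.injective (congrArg Subtype.val h)))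
    · exact Cardinal.mk_le_of_injective (f := fun y : {j // s j = 2} =>
        (⟨π' y, two_to_two' _ y.2⟩ : {i // r i = 2}))
        (fun a b h => Subtype.ext (π'.injective (congrArg Subtype.val h)))
  have hmk1 : #{i // r i = 1} = #{j // s j = 1} := by
    apply le_antisymm
    · exact Cardinal.mk_le_of_injective (f := fun x : {i // r i = 1} =>
        (⟨π'.symm x, one_from_one' _ x.2⟩ : {j // s j = 1}))
        (fun a b h => Subtype.ext (π'.symm.injective (congrArg Subtype.val h)))
    · exact Cardinal.mk_le_of_injective (f := fun y : {j // s j = 1} =>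
        (⟨π.symm y, one_from_one _ y.2⟩ : {i // r i = 1}))
        (fun a b h => Subtype.ext (π.symm.injective (congrArg Subtype.val h)))
  obtain ⟨e2⟩ := Cardinal.eq.mp hmk2
  obtain ⟨e1⟩ := Cardinal.eq.mp hmk1
  set τf : I → I := fun i =>
    if h3 : 3 ≤ r i then π i
    else if h2 : r i = 2 then (e2 ⟨i, h2⟩ : I)
    else (e1 ⟨i, (r_eq i h3).resolve_right h2⟩ : I) with hτfdef
  set σf : I → I := fun j =>
    if h3 : 3 ≤ s j then π.symm j
    else if h2 : s j = 2 then (e2.symm ⟨j, h2⟩ : I)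
    else (e1.symm ⟨j, (s_eq j h3).resolve_right h2⟩ : I) with hσfdef
  have hlinv : Function.LeftInverse σf τf := by
    intro i
    by_cases h3 : 3 ≤ r i
    · have hs3 : 3 ≤ s (π i) := hAB i h3
      simp only [hτfdef, hσfdef, dif_pos h3, dif_pos hs3, Equiv.symm_apply_apply]
    · by_cases h2 : r i = 2
      · have hv : s ((e2 ⟨i, h2⟩ : {j // s j = 2}) : I) = 2 := (e2 ⟨i, h2⟩).2
        have hns3 : ¬ 3 ≤ s ((e2 ⟨i, h2⟩ : {j // s j = 2}) : I) := by rw [hv]; exact not32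
        simp only [hτfdef, hσfdef, dif_neg h3, dif_pos h2, dif_neg hns3, dif_pos hv]
        show ((e2.symm (e2 ⟨i, h2⟩) : {i // r i = 2}) : I) = i
        rw [Equiv.symm_apply_apply]
      · have hv : s ((e1 ⟨i, (r_eq i h3).resolve_right h2⟩ : {j // s j = 1}) : I) = 1 :=
          (e1 ⟨i, (r_eq i h3).resolve_right h2⟩).2
        have hns3 : ¬ 3 ≤ s ((e1 ⟨i, (r_eq i h3).resolve_right h2⟩ : {j // s j = 1}) : I) := by
          rw [hv]; exact not_card31
        have hns2 : ¬ s ((e1 ⟨i, (r_eq i h3).resolve_right h2⟩ : {j // s j = 1}) : I) = 2 := by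
          rw [hv]; exact card_ne12
        simp only [hτfdef, hσfdef, dif_neg h3, dif_neg h2, dif_neg hns3, dif_neg hns2]
        show ((e1.symm (e1 ⟨i, (r_eq i h3).resolve_right h2⟩) : {i // r i = 1}) : I) = i
        rw [Equiv.symm_apply_apply]
  have hrinv : Function.RightInverse σf τf := by
    intro j
    by_cases h3 : 3 ≤ s j
    · have hr3 : 3 ≤ r (π.symm j) := keyA' j h3
      simp only [hτfdef, hσfdef, dif_pos h3, dif_pos hr3, Equiv.apply_symm_apply]
    · by_cases h2 : s j = 2
      · have hv : r ((e2.symm ⟨j, h2⟩ : {i // r i = 2}) : I) = 2 := (e2.symm ⟨j, h2⟩).2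
        have hnr3 : ¬ 3 ≤ r ((e2.symm ⟨j, h2⟩ : {i // r i = 2}) : I) := by rw [hv]; exact not32
        simp only [hτfdef, hσfdef, dif_neg h3, dif_pos h2, dif_neg hnr3, dif_pos hv]
        show ((e2 (e2.symm ⟨j, h2⟩) : {j // s j = 2}) : I) = j
        rw [Equiv.apply_symm_apply]
      · have hv : r ((e1.symm ⟨j, (s_eq j h3).resolve_right h2⟩ : {i // r i = 1}) : I) = 1 :=
          (e1.symm ⟨j, (s_eq j h3).resolve_right h2⟩).2
        have hnr3 : ¬ 3 ≤ r ((e1.symm ⟨j, (s_eq j h3).resolve_right h2⟩ : {i // r i = 1}) : I) := by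
          rw [hv]; exact not_card31
        have hnr2 : ¬ r ((e1.symm ⟨j, (s_eq j h3).resolve_right h2⟩ : {i // r i = 1}) : I) = 2 := by
          rw [hv]; exact card_ne12
        simp only [hτfdef, hσfdef, dif_neg h3, dif_neg h2, dif_neg hnr3, dif_neg hnr2]
        show ((e1 (e1.symm ⟨j, (s_eq j h3).resolve_right h2⟩) : {j // s j = 1}) : I) = j
        rw [Equiv.apply_symm_apply]
  refine ⟨⟨τf, σf, hlinv, hrinv⟩, ?_⟩
  intro i
  by_cases h3 : 3 ≤ r i
  · simp only [hτfdef, Equiv.coe_fn_mk, dif_pos h3]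
    exact (keyA i h3).symm
  · by_cases h2 : r i = 2
    · simp only [hτfdef, Equiv.coe_fn_mk, dif_neg h3, dif_pos h2]
      rw [h2, (e2 ⟨i, h2⟩).2]
    · simp only [hτfdef, Equiv.coe_fn_mk, dif_neg h3, dif_neg h2]
      rw [(e1 ⟨i, (r_eq i h3).resolve_right h2⟩).2]
      exact (r_eq i h3).resolve_right h2

end DJ
namespace DJ

variable {X I : Type*} {P : I → Set X}

lemma j_construct (hP : IsPartition P) {f g : X → X} {χf χg : I → I}
    (hf : MemB P f χf) (hg : MemB P g χg) (π : I ≃ I)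
    (hle : ∀ i, #(f '' P i) ≤ #(g '' P (π i))) :
    ∃ h1 χ1 h2 χ2, MemB P h1 χ1 ∧ MemB P h2 χ2 ∧ ∀ x, f x = h2 (g (h1 x)) := by
  classical
  have ι : ∀ i, (f '' P i) ↪ (g '' P (π i)) := fun i => ((Cardinal.le_def _ _).mp (hle i)).some
  obtain ⟨χg', hgl, hgr⟩ := Function.bijective_iff_has_inverse.mp hg.2
  have hpre : ∀ (i : I) (y : (g '' P (π i))), ∃ z, z ∈ P (π i) ∧ g z = (y : X) := fun i y => y.2
  choose pre hpre1 hpre2 using hpre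
  set h1a : I → X → X := fun i x =>
    if hx : f x ∈ f '' P i then pre i (ι i ⟨f x, hx⟩) else dflt hP (π i) with hh1adef
  set h1 : X → X := fun x => h1a (idx hP x) x with hh1def
  set h2a : I → X → X := fun i y =>
    if hy : ∃ w : (f '' P i), (↑(ι i w) : X) = y then (↑(hy.choose) : X)
    else dflt hP (χf i) with hh2adef
  set h2 : X → X := fun y => h2a (π.symm (χg' (idx hP y))) y with hh2def
  have h1mem : ∀ i x, h1a i x ∈ P (π i) := by
    intro i x
    simp only [hh1adef]
    split
    · exact hpre1 _ _
    · exact dflt_mem hP _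
  have h2mem : ∀ i y, h2a i y ∈ P (χf i) := by
    intro i y
    simp only [hh2adef]
    split
    case isTrue hy => exact (hf.1 i).image_subset (hy.choose).2
    case isFalse => exact dflt_mem hP _
  refine ⟨h1, ⇑π, h2, fun j => χf (π.symm (χg' j)), ?_, ?_, ?_⟩
  · constructor
    · intro i x hx
      rw [show h1 x = h1a i x from by simp only [hh1def]; rw [idx_eq hP hx]]
      exact h1mem i x
    · exact π.bijective
  · constructor
    · intro j y hy
      rw [show h2 y = h2a (π.symm (χg' j)) y from by simp only [hh2def]; rw [idx_eq hP hy]]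
      exact h2mem _ y
    · exact hf.2.comp (π.symm.bijective.comp ⟨hgr.injective, hgl.surjective⟩)
  · intro x
    have hxm : f x ∈ f '' P (idx hP x) := Set.mem_image_of_mem f (idx_mem hP x)
    have hz : h1 x = pre (idx hP x) (ι (idx hP x) ⟨f x, hxm⟩) := by
      simp only [hh1def, hh1adef]; rw [dif_pos hxm]
    have hzmem : h1 x ∈ P (π (idx hP x)) := by
      rw [show h1 x = h1a (idx hP x) x from by simp only [hh1def]]
      exact h1mem _ x
    have hgz : g (h1 x) = (↑(ι (idx hP x) ⟨f x, hxm⟩) : X) := by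
      rw [hz]; exact hpre2 _ _
    have hblock : idx hP (g (h1 x)) = χg (π (idx hP x)) := idx_eq hP (hg.1 _ hzmem)
    have hi0 : π.symm (χg' (idx hP (g (h1 x)))) = idx hP x := by
      rw [hblock, hgl, Equiv.symm_apply_apply]
    rw [show h2 (g (h1 x)) = h2a (idx hP x) (g (h1 x)) from by
      simp only [hh2def]; rw [hi0]]
    have hw : ∃ w : (f '' P (idx hP x)), (↑(ι (idx hP x) w) : X) = g (h1 x) := ⟨⟨f x, hxm⟩, hgz.symm⟩
    simp only [hh2adef]
    rw [dif_pos hw]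
    have hcs := hw.choose_spec
    have heqw : hw.choose = ⟨f x, hxm⟩ :=
      (ι (idx hP x)).injective (Subtype.ext (hcs.trans hgz))
    rw [heqw]

lemma d_construct (hP : IsPartition P) {f g : X → X} {χf χg : I → I}
    (hf : MemB P f χf) (hg : MemB P g χg) (τ : I ≃ I)
    (heq : ∀ i, #(f '' P i) = #(g '' P (τ i))) : GreenD P f g := by
  classical
  obtain ⟨χf', hfl, hfr⟩ := Function.bijective_iff_has_inverse.mp hf.2
  obtain ⟨χg', hgl, hgr⟩ := Function.bijective_iff_has_inverse.mp hg.2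
  have ψ : ∀ i, (g '' P (τ i)) ≃ (f '' P i) := fun i => ((Cardinal.eq.mp (heq i)).some).symm
  set ka : I → X → X := fun i x =>
    if hx : g x ∈ g '' P (τ i) then (↑(ψ i ⟨g x, hx⟩) : X) else dflt hP (χf i) with hkadef
  set k : X → X := fun x => ka (τ.symm (idx hP x)) x with hkdef
  have kamem : ∀ i x, ka i x ∈ P (χf i) := by
    intro i x
    simp only [hkadef]
    split
    case isTrue hx => exact (hf.1 i).image_subset (ψ i ⟨g x, hx⟩).2
    case isFalse => exact dflt_mem hP _
  have hkmemB : MemB P k (fun j => χf (τ.symm j)) := by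
    constructor
    · intro j x hx
      rw [show k x = ka (τ.symm j) x from by simp only [hkdef]; rw [idx_eq hP hx]]
      exact kamem _ x
    · exact hf.2.comp τ.symm.bijective
  have hcond : ∀ x, g x ∈ g '' P (τ (τ.symm (idx hP x))) := by
    intro x
    rw [Equiv.apply_symm_apply]
    exact Set.mem_image_of_mem g (idx_mem hP x)
  have kval : ∀ x, k x = ↑(ψ (τ.symm (idx hP x)) ⟨g x, hcond x⟩) := by
    intro x
    simp only [hkdef, hkadef]
    rw [dif_pos (hcond x)]
  have kim : ∀ x, k x ∈ f '' P (τ.symm (idx hP x)) := by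
    intro x
    rw [kval x]
    exact (ψ _ _).2
  have hsel : ∀ (i : I) (w : (g '' P (τ i))), ∃ z, z ∈ P (τ i) ∧ g z = (w : X) := fun i w => w.2
  choose sel selmem selval using hsel
  set ha : I → X → X := fun i x =>
    if hx : f x ∈ f '' P i then sel i ((ψ i).symm ⟨f x, hx⟩) else dflt hP (τ i) with hhadef
  set h : X → X := fun x => ha (idx hP x) x with hhdef
  have hamem : ∀ i x, ha i x ∈ P (τ i) := by
    intro i x; simp only [hhadef]; split
    · exact selmem _ _
    · exact dflt_mem hP _
  have hhmemB : MemB P h ⇑τ := by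
    constructor
    · intro i x hx
      rw [show h x = ha i x from by simp only [hhdef]; rw [idx_eq hP hx]]
      exact hamem i x
    · exact τ.bijective
  have he1 : ∀ x, f x = k (h x) := by
    intro x
    have hxm : f x ∈ f '' P (idx hP x) := Set.mem_image_of_mem f (idx_mem hP x)
    have hz : h x = sel (idx hP x) ((ψ (idx hP x)).symm ⟨f x, hxm⟩) := by
      simp only [hhdef, hhadef]; rw [dif_pos hxm]
    have hzm : h x ∈ P (τ (idx hP x)) := by
      rw [hz]; exact selmem _ _
    have hidz : idx hP (h x) = τ (idx hP x) := idx_eq hP hzm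
    rw [show k (h x) = ka (idx hP x) (h x) from by
      simp only [hkdef]; rw [hidz, Equiv.symm_apply_apply]]
    have hgz : g (h x) ∈ g '' P (τ (idx hP x)) := Set.mem_image_of_mem g hzm
    simp only [hkadef]
    rw [dif_pos hgz]
    have hsub : (⟨g (h x), hgz⟩ : (g '' P (τ (idx hP x)))) = (ψ (idx hP x)).symm ⟨f x, hxm⟩ :=
      Subtype.ext ((congrArg g hz).trans (selval _ _))
    rw [hsub, Equiv.apply_symm_apply]
  set ha' : I → X → X := fun j x =>
    if hx : k x ∈ f '' P (τ.symm j) then hx.choose else dflt hP (τ.symm j) with hha'def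
  set h' : X → X := fun x => ha' (idx hP x) x with hh'def
  have ha'mem : ∀ j x, ha' j x ∈ P (τ.symm j) := by
    intro j x; simp only [hha'def]; split
    case isTrue hx => exact hx.choose_spec.1
    case isFalse => exact dflt_mem hP _
  have hh'memB : MemB P h' ⇑τ.symm := by
    constructor
    · intro j x hx
      rw [show h' x = ha' j x from by simp only [hh'def]; rw [idx_eq hP hx]]
      exact ha'mem j x
    · exact τ.symm.bijective
  have he2 : ∀ x, k x = f (h' x) := by
    intro x
    have hx : k x ∈ f '' P (τ.symm (idx hP x)) := kim x
    rw [show h' x = ha' (idx hP x) x from by simp only [hh'def]]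
    simp only [hha'def]
    rw [dif_pos hx]
    exact hx.choose_spec.2.symm
  set hb : I → X → X := fun j y =>
    if hy : y ∈ g '' P (τ (τ.symm j)) then (↑(ψ (τ.symm j) ⟨y, hy⟩) : X)
    else dflt hP (χf (τ.symm j)) with hhbdef
  set h2 : X → X := fun y => hb (χg' (idx hP y)) y with hh2def
  have hbmem : ∀ j y, hb j y ∈ P (χf (τ.symm j)) := by
    intro j y; simp only [hhbdef]; split
    case isTrue hy => exact (hf.1 _).image_subset (ψ (τ.symm j) ⟨y, hy⟩).2
    case isFalse => exact dflt_mem hP _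
  have hh2memB : MemB P h2 (fun m => χf (τ.symm (χg' m))) := by
    constructor
    · intro m y hy
      rw [show h2 y = hb (χg' m) y from by simp only [hh2def]; rw [idx_eq hP hy]]
      exact hbmem _ y
    · exact hf.2.comp (τ.symm.bijective.comp ⟨hgr.injective, hgl.surjective⟩)
  have he3 : ∀ x, k x = h2 (g x) := by
    intro x
    have hgm : g x ∈ P (χg (idx hP x)) := hg.1 _ (idx_mem hP x)
    have hid : idx hP (g x) = χg (idx hP x) := idx_eq hP hgm
    rw [show h2 (g x) = hb (idx hP x) (g x) from by
      simp only [hh2def]; rw [hid, hgl]]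
  set hc : I → X → X := fun i y =>
    if hy : y ∈ f '' P i then (↑((ψ i).symm ⟨y, hy⟩) : X) else dflt hP (χg (τ i)) with hhcdef
  set h3 : X → X := fun y => hc (χf' (idx hP y)) y with hh3def
  have hcmem : ∀ i y, hc i y ∈ P (χg (τ i)) := by
    intro i y; simp only [hhcdef]; split
    case isTrue hy => exact (hg.1 _).image_subset ((ψ i).symm ⟨y, hy⟩).2
    case isFalse => exact dflt_mem hP _
  have hh3memB : MemB P h3 (fun m => χg (τ (χf' m))) := by
    constructor
    · intro m y hy
      rw [show h3 y = hc (χf' m) y from by simp only [hh3def]; rw [idx_eq hP hy]]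
      exact hcmem _ y
    · exact hg.2.comp (τ.bijective.comp ⟨hfr.injective, hfl.surjective⟩)
  have he4 : ∀ x, g x = h3 (k x) := by
    intro x
    have hkm : k x ∈ P (χf (τ.symm (idx hP x))) := (hf.1 _).image_subset (kim x)
    have hid : idx hP (k x) = χf (τ.symm (idx hP x)) := idx_eq hP hkm
    rw [show h3 (k x) = hc (τ.symm (idx hP x)) (k x) from by
      simp only [hh3def]; rw [hid, hfl]]
    simp only [hhcdef]
    rw [dif_pos (kim x)]
    have hsub : (⟨k x, kim x⟩ : (f '' P (τ.symm (idx hP x)))) = ψ (τ.symm (idx hP x)) ⟨g x, hcond x⟩ :=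
      Subtype.ext (kval x)
    rw [hsub, Equiv.symm_apply_apply]
  exact ⟨k, fun j => χf (τ.symm j), hkmemB,
    ⟨h, ⇑τ, h', ⇑τ.symm, hhmemB, hh'memB, he1, he2⟩,
    ⟨h2, fun m => χf (τ.symm (χg' m)), h3, fun m => χg (τ (χf' m)), hh2memB, hh3memB, he3, he4⟩⟩

end DJ
namespace DJ

variable {X I : Type*} {P : I → Set X}

lemma not_DJ (hP : IsPartition P) (hinf : {i : I | 3 ≤ #(P i)}.Infinite) :
    ∃ f χf g χg, MemB P f χf ∧ MemB P g χg ∧ GreenJ P f g ∧ ¬ GreenD P f g := by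
  classical
  have e : ℕ ↪ {i : I | 3 ≤ #(P i)} := Set.Infinite.natEmbedding _ hinf
  set C : ℕ ↪ I := e.trans (Function.Embedding.subtype _) with hCdef
  have hCS : ∀ n, 3 ≤ #(P (C n)) := fun n => (e n).2
  have hu : ∀ i : I, ∃ t : X × X × X,
      (t.1 ∈ P i ∧ t.2.1 ∈ P i ∧ t.2.2 ∈ P i) ∧
      (3 ≤ #(P i) → t.1 ≠ t.2.1 ∧ t.1 ≠ t.2.2 ∧ t.2.1 ≠ t.2.2) := by
    intro i
    by_cases hi : 3 ≤ #(P i)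
    · have h2 : (2:Cardinal) ≤ #(P i) := le_trans card_two_le_three hi
      obtain ⟨x, y, hxy⟩ := Cardinal.two_le_iff.mp h2
      obtain ⟨z, hzx, hzy⟩ := Cardinal.three_le hi x y
      refine ⟨((x:X), (y:X), (z:X)), ⟨x.2, y.2, z.2⟩, fun _ => ?_⟩
      exact ⟨fun h => hxy (Subtype.ext h), fun h => hzx (Subtype.ext h.symm),
             fun h => hzy (Subtype.ext h.symm)⟩
    · exact ⟨(dflt hP i, dflt hP i, dflt hP i), ⟨dflt_mem hP i, dflt_mem hP i, dflt_mem hP i⟩,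
        fun h => absurd h hi⟩
  choose t ht1 ht2 using hu
  set u0 : I → X := fun i => (t i).1 with hu0def
  set u1 : I → X := fun i => (t i).2.1 with hu1def
  set u2 : I → X := fun i => (t i).2.2 with hu2def
  have hm0 : ∀ i, u0 i ∈ P i := fun i => (ht1 i).1
  have hm1 : ∀ i, u1 i ∈ P i := fun i => (ht1 i).2.1
  have hm2 : ∀ i, u2 i ∈ P i := fun i => (ht1 i).2.2
  have hne01 : ∀ i, 3 ≤ #(P i) → u0 i ≠ u1 i := fun i h => (ht2 i h).1
  have hne02 : ∀ i, 3 ≤ #(P i) → u0 i ≠ u2 i := fun i h => (ht2 i h).2.1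
  have hne12 : ∀ i, 3 ≤ #(P i) → u1 i ≠ u2 i := fun i h => (ht2 i h).2.2
  set f0 : I → X → X := fun i x =>
    if ∃ n, C (2*n) = i then (if x = u1 i then u1 i else if x = u2 i then u2 i else u0 i)
    else dflt hP i with hf0def
  set f : X → X := fun x => f0 (idx hP x) x with hfdef
  set g0 : I → X → X := fun i x =>
    if i = C 0 then (if x = u1 i then u1 i else u0 i) else f0 i x with hg0def
  set g : X → X := fun x => g0 (idx hP x) x with hgdef
  have hf0mem : ∀ i x, f0 i x ∈ P i := by
    intro i x; simp only [hf0def]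
    split
    · split
      · exact hm1 i
      · split
        · exact hm2 i
        · exact hm0 i
    · exact dflt_mem hP i
  have hg0mem : ∀ i x, g0 i x ∈ P i := by
    intro i x; simp only [hg0def]
    split
    · split
      · exact hm1 _
      · exact hm0 _
    · exact hf0mem i x
  have hfMem : MemB P f (fun i => i) := by
    refine ⟨fun i x hx => ?_, Function.bijective_id⟩
    rw [show f x = f0 i x from by simp only [hfdef]; rw [idx_eq hP hx]]
    exact hf0mem i x
  have hgMem : MemB P g (fun i => i) := by
    refine ⟨fun i x hx => ?_, Function.bijective_id⟩
    rw [show g x = g0 i x from by simp only [hgdef]; rw [idx_eq hP hx]]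
    exact hg0mem i x
  have imf : ∀ i, f '' P i = f0 i '' P i := by
    intro i
    apply Set.image_congr
    intro x hx
    simp only [hfdef]; rw [idx_eq hP hx]
  have img : ∀ i, g '' P i = g0 i '' P i := by
    intro i
    apply Set.image_congr
    intro x hx
    simp only [hgdef]; rw [idx_eq hP hx]
  have htrip : ∀ i, (∃ n, C (2*n) = i) → f '' P i = {u0 i, u1 i, u2 i} := by
    intro i hcond
    have h3 : 3 ≤ #(P i) := by obtain ⟨n, rfl⟩ := hcond; exact hCS (2*n)
    rw [imf i]
    apply Set.Subset.antisymm
    · rintro y ⟨x, hx, rfl⟩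
      simp only [hf0def, if_pos hcond, Set.mem_insert_iff, Set.mem_singleton_iff]
      split
      · exact Or.inr (Or.inl rfl)
      · split
        · exact Or.inr (Or.inr rfl)
        · exact Or.inl rfl
    · intro y hy
      simp only [Set.mem_insert_iff, Set.mem_singleton_iff] at hy
      rcases hy with rfl | rfl | rfl
      · refine ⟨u0 i, hm0 i, ?_⟩
        simp only [hf0def, if_pos hcond]
        rw [if_neg (hne01 i h3), if_neg (hne02 i h3)]
      · refine ⟨u1 i, hm1 i, ?_⟩
        simp only [hf0def, if_pos hcond]
        simp
      · refine ⟨u2 i, hm2 i, ?_⟩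
        simp only [hf0def, if_pos hcond]
        rw [if_neg (fun h => (hne12 i h3) h.symm)]
        simp
  have rkf3 : ∀ i, (∃ n, C (2*n) = i) → #(f '' P i) = 3 := by
    intro i hcond
    have h3 : 3 ≤ #(P i) := by obtain ⟨n, rfl⟩ := hcond; exact hCS (2*n)
    have h01 : u0 i ∉ ({u1 i, u2 i} : Set X) := by
      simp only [Set.mem_insert_iff, Set.mem_singleton_iff]
      push_neg
      exact ⟨hne01 i h3, hne02 i h3⟩
    have h12 : u1 i ∉ ({u2 i} : Set X) := by
      simp only [Set.mem_singleton_iff]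
      exact hne12 i h3
    rw [htrip i hcond, Cardinal.mk_insert h01, Cardinal.mk_insert h12, Cardinal.mk_singleton,
        one_add_one_eq_two, two_add_one_eq_three]
  have rkf1 : ∀ i, ¬(∃ n, C (2*n) = i) → f '' P i = {dflt hP i} := by
    intro i hcond
    rw [imf i]
    apply Set.Subset.antisymm
    · rintro y ⟨x, hx, rfl⟩
      simp only [hf0def, if_neg hcond, Set.mem_singleton_iff]
    · intro y hy
      rw [Set.mem_singleton_iff] at hy
      subst hy
      obtain ⟨x, hx⟩ := hP.1 i
      exact ⟨x, hx, by simp only [hf0def, if_neg hcond]⟩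
  have hpair : g '' P (C 0) = {u0 (C 0), u1 (C 0)} := by
    rw [img (C 0)]
    apply Set.Subset.antisymm
    · rintro y ⟨x, hx, rfl⟩
      simp only [hg0def, if_pos rfl, Set.mem_insert_iff, Set.mem_singleton_iff]
      split
      · exact Or.inr rfl
      · exact Or.inl rfl
    · intro y hy
      simp only [Set.mem_insert_iff, Set.mem_singleton_iff] at hy
      rcases hy with rfl | rfl
      · refine ⟨u0 (C 0), hm0 _, ?_⟩
        simp only [hg0def, if_pos rfl]
        rw [if_neg (hne01 (C 0) (hCS 0))]
      · refine ⟨u1 (C 0), hm1 _, ?_⟩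
        simp only [hg0def, if_pos rfl]
        simp
  have rkg2 : #(g '' P (C 0)) = 2 := by
    have h01 : u0 (C 0) ∉ ({u1 (C 0)} : Set X) := by
      simp only [Set.mem_singleton_iff]
      exact hne01 (C 0) (hCS 0)
    rw [hpair, Cardinal.mk_insert h01, Cardinal.mk_singleton, one_add_one_eq_two]
  have imgne : ∀ i, i ≠ C 0 → g '' P i = f '' P i := by
    intro i hne
    rw [img i, imf i]
    refine Set.image_congr (fun x _ => ?_)
    simp only [hg0def]
    rw [if_neg hne]
  set p : ℕ → ℕ := fun m => if m % 2 = 0 then m + 2 else m - 2 with hpdef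
  set q : ℕ → ℕ := fun m => if m % 2 = 0 then (if m = 0 then 1 else m - 2) else m + 2 with hqdef
  have hpq : ∀ m, q (p m) = m := by
    intro m; simp only [hpdef, hqdef]
    rcases Nat.even_or_odd m with hm | hm
    · have h0 : m % 2 = 0 := Nat.even_iff.mp hm
      rw [if_pos h0, if_pos (by omega : (m + 2) % 2 = 0), if_neg (by omega : ¬ m + 2 = 0)]
      omega
    · have h1 : m % 2 = 1 := Nat.odd_iff.mp hm
      rw [if_neg (by omega : ¬ m % 2 = 0)]
      by_cases hm1 : m = 1
      · subst hm1; norm_num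
      · rw [if_neg (by omega : ¬ (m - 2) % 2 = 0)]
        omega
  have hqp : ∀ m, p (q m) = m := by
    intro m; simp only [hpdef, hqdef]
    rcases Nat.even_or_odd m with hm | hm
    · have h0 : m % 2 = 0 := Nat.even_iff.mp hm
      rw [if_pos h0]
      by_cases hm0 : m = 0
      · subst hm0; norm_num
      · rw [if_neg hm0, if_pos (by omega : (m - 2) % 2 = 0)]
        omega
    · have h1 : m % 2 = 1 := Nat.odd_iff.mp hm
      rw [if_neg (by omega : ¬ m % 2 = 0), if_neg (by omega : ¬ (m + 2) % 2 = 0)]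
      omega
  set pE : Equiv.Perm ℕ := ⟨p, q, hpq, hqp⟩ with hpEdef
  set π : Equiv.Perm I := pE.viaEmbedding C with hπdef
  have hπC : ∀ n, π (C n) = C (p n) := by
    intro n
    simp only [hπdef]
    rw [Equiv.Perm.viaEmbedding_apply]
    rfl
  have hle1 : ∀ i, #(f '' P i) ≤ #(g '' P (π i)) := by
    intro i
    by_cases hcond : ∃ n, C (2*n) = i
    · obtain ⟨n, rfl⟩ := hcond
      rw [rkf3 _ ⟨n, rfl⟩, hπC (2*n)]
      have hp2 : p (2*n) = 2*(n+1) := by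
        simp only [hpdef]; rw [if_pos (by omega : (2*n) % 2 = 0)]; omega
      rw [hp2]
      have hne : C (2*(n+1)) ≠ C 0 := fun h => by
        have := C.injective h; omega
      rw [imgne _ hne, rkf3 _ ⟨n+1, rfl⟩]
    · rw [rkf1 i hcond, Cardinal.mk_singleton]
      exact rank_one_le hP g _
  have hle2 : ∀ i, #(g '' P i) ≤ #(f '' P i) := by
    intro i
    by_cases h0 : i = C 0
    · subst h0
      rw [rkg2, rkf3 _ ⟨0, rfl⟩]
      exact card_two_le_three
    · rw [imgne i h0]
  have hJ : GreenJ P f g :=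
    ⟨j_construct hP hfMem hgMem π hle1,
     j_construct hP hgMem hfMem (Equiv.refl I) (fun i => hle2 i)⟩
  refine ⟨f, _, g, _, hfMem, hgMem, hJ, ?_⟩
  intro hD
  obtain ⟨β, hβ, hrk⟩ := d_rank hP hfMem hgMem hD
  obtain ⟨i0, hi0⟩ := hβ.2 (C 0)
  have h2 : #(f '' P i0) = 2 := by rw [hrk i0, hi0, rkg2]
  by_cases hcond : ∃ n, C (2*n) = i0
  · rw [rkf3 i0 hcond] at h2
    have h32 : (3:ℕ) = 2 := by exact_mod_cast h2
    omega
  · rw [rkf1 i0 hcond, Cardinal.mk_singleton] at h2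
    have h12 : (1:ℕ) = 2 := by exact_mod_cast h2
    omega

end DJ

/-- `D = J` on `B(X,P)` iff only finitely many blocks of `P` have at least three
elements. -/
theorem D_eq_J_iff {X I : Type*} [Nonempty X] (P : I → Set X) (hP : IsPartition P) :
    (∀ f χf g χg, MemB P f χf → MemB P g χg → (GreenD P f g ↔ GreenJ P f g)) ↔
      {i : I | 3 ≤ Cardinal.mk ↥(P i)}.Finite := by
  constructor
  · intro H
    by_contra hinf
    obtain ⟨f, χf, g, χg, hf, hg, hJ, hnD⟩ := DJ.not_DJ hP hinf
    exact hnD ((H f χf g χg hf hg).mpr hJ)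
  · intro hfin f χf g χg hf hg
    constructor
    · exact DJ.d_to_j
    · intro hJ
      obtain ⟨⟨h1, χ1, h2, χ2, hh1, hh2, e12⟩, ⟨h3, χ3, h4, χ4, hh3, hh4, e34⟩⟩ := hJ
      obtain ⟨τ, hτ⟩ := DJ.comb (fun i => #(f '' P i)) (fun i => #(g '' P i))
        (DJ.rank_one_le hP f) (DJ.rank_one_le hP g)
        (hfin.subset fun i hi => show 3 ≤ #(P i) from le_trans hi (DJ.rank_le f i))
        (hfin.subset fun i hi => show 3 ≤ #(P i) from le_trans hi (DJ.rank_le g i))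
        (Equiv.ofBijective χ1 hh1.2) (Equiv.ofBijective χ3 hh3.2)
        (fun i => DJ.j_rank hh1 e12 i) (fun i => DJ.j_rank hh3 e34 i)
      exact DJ.d_construct hP hf hg τ hτ
end

section
/- Let f be in T(X,P). Then f is a bijection of X whose inverse also preserves P (i.e. f is a unit of the monoid T(X,P)) if and only if (i) for every i in I the restriction of f to X_i, viewed as a map from X_i to X_{chi_f(i)}, is bijective, and (ii) the character chi_f : I -> I is a bijection. -/
open Cardinal

/-- `f ∈ T(X,P)` is a unit of `T(X,P)` iff every restriction `f : P i → P (χf i)`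
is bijective and the character `χf` is a bijection of `I`. -/
theorem unit_iff {X I : Type*} [Nonempty X] (P : I → Set X) (hP : IsPartition P)
    (f : X → X) (χf : I → I) (hf : ∀ i, Set.MapsTo f (P i) (P (χf i))) :
    (∃ (v : X → X) (χv : I → I), (∀ i, Set.MapsTo v (P i) (P (χv i))) ∧
        (∀ x, v (f x) = x) ∧ (∀ x, f (v x) = x)) ↔
      (∀ i, Set.BijOn f (P i) (P (χf i))) ∧ Function.Bijective χf := by
  obtain ⟨hne, hdisj, hcov⟩ := hP
  have uniq : ∀ {x : X} {i j : I}, x ∈ P i → x ∈ P j → i = j := by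
    intro x i j hi hj
    by_contra h
    exact Set.disjoint_left.mp (hdisj h) hi hj
  constructor
  · rintro ⟨v, χv, hv, hvf, hfv⟩
    have hχ1 : ∀ i, χv (χf i) = i := by
      intro i
      obtain ⟨x, hx⟩ := hne i
      have h1 := hv _ (hf i hx)
      rw [hvf] at h1
      exact uniq h1 hx
    have hχ2 : ∀ i, χf (χv i) = i := by
      intro i
      obtain ⟨x, hx⟩ := hne i
      have h1 := hf _ (hv i hx)
      rw [hfv] at h1
      exact uniq h1 hx
    have hfinj : Function.Injective f := Function.LeftInverse.injective hvf
    refine ⟨fun i => ⟨hf i, hfinj.injOn, fun y hy => ?_⟩,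
      Function.bijective_iff_has_inverse.mpr ⟨χv, hχ1, hχ2⟩⟩
    have hvy : v y ∈ P i := by
      have h1 := hv _ hy
      rwa [hχ1] at h1
    exact ⟨v y, hvy, hfv y⟩
  · rintro ⟨hbij, hχ⟩
    set e := Equiv.ofBijective χf hχ with he
    choose ι hι using hcov
    have hpre : ∀ x : X, ∃ y ∈ P (e.symm (ι x)), f y = x := by
      intro x
      have h2 : x ∈ P (χf (e.symm (ι x))) := by
        have h3 : χf (e.symm (ι x)) = ι x := e.apply_symm_apply (ι x)
        rw [h3]; exact hι x
      exact (hbij (e.symm (ι x))).surjOn h2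
    choose v hv1 hv2 using hpre
    refine ⟨v, fun i => e.symm i, fun i x hx => ?_, fun x => ?_, hv2⟩
    · have h1 : ι x = i := uniq (hι x) hx
      rw [← h1]; exact hv1 x
    · have hfx : f x ∈ P (χf (ι x)) := hf _ (hι x)
      have h1 : ι (f x) = χf (ι x) := uniq (hι (f x)) hfx
      have hvin : v (f x) ∈ P (ι x) := by
        have h3 := hv1 (f x)
        rw [h1] at h3
        have h4 : e.symm (χf (ι x)) = ι x := e.symm_apply_apply (ι x)
        rwa [h4] at h3
      exact (hbij (ι x)).injOn hvin (hι x) (by rw [hv2])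
end
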